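/- arXiv:0811.3848 — 4 statements merged into one kernel-verified Lean document; each statement's English description precedes it below -/
import Mathlib

section
/- For every λ > 0, the principal Calkin space ⟨(n^{−λ})_{n=1}^∞⟩ generated by the sequence (n^{−λ})_{n=1}^∞ is not stable. -/
open scoped BigOperators

noncomputable section

/-- The space of complex null sequences `c₀`. -/
def c0 : Set (ℕ → ℂ) := {α | Filter.Tendsto α Filter.atTop (nhds 0)}

/-- `rearrSum α n` is the supremum of `∑_{i ∈ F} |α i|` over finite sets `F ⊆ ℕ` with
`|F| = n`; for a null sequence it equals `α*₁ + ⋯ + α*ₙ` where `α*` is the decreasing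
rearrangement of `(|α_n|)`. -/
def rearrSum (α : ℕ → ℂ) (n : ℕ) : ℝ :=
  sSup ((fun F : Finset ℕ => ∑ i ∈ F, ‖α i‖) '' {F | F.card = n})

/-- The decreasing rearrangement of a null sequence, 0-indexed:
`rearr α n = α*_{n+1}`. -/
def rearr (α : ℕ → ℂ) (n : ℕ) : ℝ := rearrSum α (n + 1) - rearrSum α n

/-- A Calkin space: a linear subspace of `c₀` containing every null sequence whose
decreasing rearrangement is dominated termwise by that of one of its members. -/
def IsCalkinSpace (I : Set (ℕ → ℂ)) : Prop :=
  I ⊆ c0 ∧ (0 : ℕ → ℂ) ∈ I ∧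
  (∀ α ∈ I, ∀ β ∈ I, α + β ∈ I) ∧
  (∀ (c : ℂ), ∀ α ∈ I, c • α ∈ I) ∧
  (∀ α ∈ I, ∀ β ∈ c0, (∀ n, rearr β n ≤ rearr α n) → β ∈ I)

/-- `tensorSum α β n` is the supremum of `∑_{(i,j) ∈ F} |α i| |β j|` over finite
`F ⊆ ℕ × ℕ` with `|F| = n`; it equals `(α⊗β)₁ + ⋯ + (α⊗β)ₙ`. -/
def tensorSum (α β : ℕ → ℂ) (n : ℕ) : ℝ :=
  sSup ((fun F : Finset (ℕ × ℕ) => ∑ p ∈ F, ‖α p.1‖ * ‖β p.2‖) '' {F | F.card = n})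

/-- The tensor sequence `α⊗β`: the decreasing rearrangement of the double sequence
`(|α_m β_n|)_{m,n}`, 0-indexed: `tensorSeq α β n = (α⊗β)_{n+1}`. -/
def tensorSeq (α β : ℕ → ℂ) (n : ℕ) : ℝ := tensorSum α β (n + 1) - tensorSum α β n

/-- Embedding of real sequences into complex sequences. -/
def toC (f : ℕ → ℝ) : ℕ → ℂ := fun n => (f n : ℂ)

/-- The tensor product `𝔦⊗𝔧` of two Calkin spaces: the smallest Calkin space
containing `α⊗β` for all `α ∈ 𝔦`, `β ∈ 𝔧`. -/
def calkinTensor (I J : Set (ℕ → ℂ)) : Set (ℕ → ℂ) :=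
  ⋂₀ {K | IsCalkinSpace K ∧ ∀ α ∈ I, ∀ β ∈ J, toC (tensorSeq α β) ∈ K}

/-- A Calkin space `𝔦` is stable if `𝔦⊗𝔦 = 𝔦`. -/
def IsStableCalkin (I : Set (ℕ → ℂ)) : Prop := IsCalkinSpace I ∧ calkinTensor I I = I

/-- The principal Calkin space `⟨α⟩` generated by `α`: the smallest Calkin space
containing `α`. -/
def principalCalkin (α : ℕ → ℂ) : Set (ℕ → ℂ) := ⋂₀ {K | IsCalkinSpace K ∧ α ∈ K}

/-- `Kw ω α n = #{m : ω^{n+1} < α m ≤ ω^n}` (the sequence `α` being 0-indexed). -/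
def Kw (ω : ℝ) (α : ℕ → ℝ) (n : ℕ) : ℕ :=
  Set.ncard {m : ℕ | ω ^ (n + 1) < α m ∧ α m ≤ ω ^ n}

/-- `K̃ₙ = Σ_{i=0}^n Kᵢ`. -/
def Ktil (ω : ℝ) (α : ℕ → ℝ) (n : ℕ) : ℕ := ∑ i ∈ Finset.range (n + 1), Kw ω α i

/-- `Mₙ = Σ_{i+j=n} Kᵢ Kⱼ`. -/
def Mw (ω : ℝ) (α : ℕ → ℝ) (n : ℕ) : ℕ :=
  ∑ i ∈ Finset.range (n + 1), Kw ω α i * Kw ω α (n - i)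

/-- `M̃ₙ = Σ_{i=0}^n Mᵢ`. -/
def Mtil (ω : ℝ) (α : ℕ → ℝ) (n : ℕ) : ℕ := ∑ i ∈ Finset.range (n + 1), Mw ω α i

section Machinery

open Filter Finset

variable {ι : Type*} [Infinite ι] [DecidableEq ι]

def genSum (g : ι → ℝ) (n : ℕ) : ℝ :=
  sSup ((fun F : Finset ι => ∑ i ∈ F, g i) '' {F | F.card = n})

def genDiff (g : ι → ℝ) (n : ℕ) : ℝ := genSum g (n + 1) - genSum g n

def TopSet (g : ι → ℝ) (F : Finset ι) : Prop := ∀ i ∉ F, ∀ j ∈ F, g i ≤ g j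

variable {g : ι → ℝ}

lemma exists_argmax (hg0 : ∀ i, 0 ≤ g i) (hfin : ∀ ε > 0, {i | ε ≤ g i}.Finite)
    (F : Finset ι) : ∃ j ∉ F, ∀ i, i ∉ F → g i ≤ g j := by
  by_cases h : ∀ i ∉ F, g i ≤ 0
  · obtain ⟨j, hj⟩ := Infinite.exists_notMem_finset F
    exact ⟨j, hj, fun i hi => (h i hi).trans (hg0 j)⟩
  · push_neg at h
    obtain ⟨i₀, hi₀F, hi₀⟩ := h
    have hT : {i | g i₀ ≤ g i}.Finite := hfin _ hi₀
    set T : Finset ι := hT.toFinset \ F with hTdef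
    have hi₀T : i₀ ∈ T := by
      simp [hTdef, Set.Finite.mem_toFinset, hi₀F]
    obtain ⟨j, hjT, hj⟩ := Finset.exists_max_image T g ⟨i₀, hi₀T⟩
    have hjF : j ∉ F := (Finset.mem_sdiff.mp hjT).2
    refine ⟨j, hjF, fun i hiF => ?_⟩
    by_cases hcase : g i₀ ≤ g i
    · exact hj i (by simp [hTdef, Set.Finite.mem_toFinset, hcase, hiF])
    · exact (le_of_not_ge hcase).trans (hj i₀ hi₀T)

lemma exists_top (hg0 : ∀ i, 0 ≤ g i) (hfin : ∀ ε > 0, {i | ε ≤ g i}.Finite)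
    (n : ℕ) : ∃ F : Finset ι, F.card = n ∧ TopSet g F := by
  induction n with
  | zero => exact ⟨∅, rfl, fun i _ j hj => absurd hj (Finset.notMem_empty j)⟩
  | succ n ih =>
    obtain ⟨F, hcard, htop⟩ := ih
    obtain ⟨j, hjF, hj⟩ := exists_argmax hg0 hfin F
    refine ⟨insert j F, by rw [Finset.card_insert_of_notMem hjF, hcard], ?_⟩
    intro i hi k hk
    have hiF : i ∉ F := fun h => hi (Finset.mem_insert_of_mem h)
    rcases Finset.mem_insert.mp hk with rfl | hkF
    · exact hj i hiF
    · exact htop i hiF k hkF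

lemma top_sum_max {F : Finset ι} (hF : TopSet g F) {G : Finset ι} (hG : G.card = F.card) :
    ∑ i ∈ G, g i ≤ ∑ i ∈ F, g i := by
  have hcards : (G \ F).card = (F \ G).card := by
    have h1 := Finset.card_inter_add_card_sdiff G F
    have h2 := Finset.card_inter_add_card_sdiff F G
    rw [Finset.inter_comm] at h2
    omega
  have key : ∑ i ∈ G \ F, g i ≤ ∑ i ∈ F \ G, g i := by
    have e := Finset.equivOfCardEq hcards
    calc ∑ i ∈ G \ F, g i = ∑ i : (G \ F : Finset ι), g i.1 := (Finset.sum_coe_sort _ _).symm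
      _ ≤ ∑ i : (G \ F : Finset ι), g (e i).1 := by
          apply Finset.sum_le_sum
          intro i _
          have hi : (i : ι) ∉ F := (Finset.mem_sdiff.mp i.2).2
          exact hF i hi (e i).1 (Finset.mem_sdiff.mp (e i).2).1
      _ = ∑ j : (F \ G : Finset ι), g j.1 := Fintype.sum_equiv e _ _ (fun i => rfl)
      _ = ∑ i ∈ F \ G, g i := Finset.sum_coe_sort _ _
  calc ∑ i ∈ G, g i = ∑ i ∈ G ∩ F, g i + ∑ i ∈ G \ F, g i :=
        (Finset.sum_inter_add_sum_sdiff G F g).symm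
    _ ≤ ∑ i ∈ G ∩ F, g i + ∑ i ∈ F \ G, g i := by linarith
    _ = ∑ i ∈ F ∩ G, g i + ∑ i ∈ F \ G, g i := by rw [Finset.inter_comm]
    _ = ∑ i ∈ F, g i := Finset.sum_inter_add_sum_sdiff F G g

lemma genSum_eq {F : Finset ι} (hF : TopSet g F) : genSum g F.card = ∑ i ∈ F, g i := by
  have hmem : (∑ i ∈ F, g i) ∈ ((fun F : Finset ι => ∑ i ∈ F, g i) '' {G | G.card = F.card}) :=
    ⟨F, rfl, rfl⟩
  apply le_antisymm
  · apply csSup_le ⟨_, hmem⟩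
    rintro x ⟨G, hG, rfl⟩
    exact top_sum_max hF hG
  · refine le_csSup ⟨∑ i ∈ F, g i, ?_⟩ hmem
    rintro x ⟨G, hG, rfl⟩
    exact top_sum_max hF hG

set_option linter.unusedSectionVars false

lemma erase_topSet {F : Finset ι} (hF : TopSet g F) {j : ι} (hj : j ∈ F)
    (hmin : ∀ k ∈ F, g j ≤ g k) : TopSet g (F.erase j) := by
  intro i hi k hk
  have hkF : k ∈ F := Finset.mem_of_mem_erase hk
  by_cases hij : i = j
  · exact hij ▸ hmin k hkF
  · exact hF i (fun hiF => hi (Finset.mem_erase.mpr ⟨hij, hiF⟩)) k hkF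

lemma genDiff_eq {F : Finset ι} {n : ℕ} (hF : TopSet g F) (hcard : F.card = n + 1)
    {j : ι} (hj : j ∈ F) (hmin : ∀ k ∈ F, g j ≤ g k) : genDiff g n = g j := by
  have h1 : genSum g (n + 1) = ∑ i ∈ F, g i := by rw [← hcard]; exact genSum_eq hF
  have h2 : genSum g n = ∑ i ∈ F.erase j, g i := by
    have : (F.erase j).card = n := by rw [Finset.card_erase_of_mem hj, hcard]; rfl
    rw [← this]; exact genSum_eq (erase_topSet hF hj hmin)
  rw [genDiff, h1, h2, ← Finset.add_sum_erase F g hj]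
  ring

lemma exists_rep (hg0 : ∀ i, 0 ≤ g i) (hfin : ∀ ε > 0, {i | ε ≤ g i}.Finite) (n : ℕ) :
    ∃ (F : Finset ι) (j : ι), TopSet g F ∧ F.card = n + 1 ∧ j ∈ F ∧
      (∀ k ∈ F, g j ≤ g k) ∧ genDiff g n = g j := by
  obtain ⟨F, hcard, htop⟩ := exists_top hg0 hfin (n + 1)
  have hne : F.Nonempty := Finset.card_pos.mp (by omega)
  obtain ⟨j, hjF, hj⟩ := Finset.exists_min_image F g hne
  exact ⟨F, j, htop, hcard, hjF, hj, genDiff_eq htop hcard hjF hj⟩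

lemma genDiff_nonneg (hg0 : ∀ i, 0 ≤ g i) (hfin : ∀ ε > 0, {i | ε ≤ g i}.Finite) (n : ℕ) :
    0 ≤ genDiff g n := by
  obtain ⟨F, j, _, _, _, _, heq⟩ := exists_rep hg0 hfin n
  rw [heq]; exact hg0 j

lemma genDiff_lower (hg0 : ∀ i, 0 ≤ g i) (hfin : ∀ ε > 0, {i | ε ≤ g i}.Finite)
    {n : ℕ} {S : Finset ι} (hS : S.card = n + 1) {c : ℝ} (hc : ∀ i ∈ S, c ≤ g i) :
    c ≤ genDiff g n := by
  obtain ⟨F, j, htop, hcard, hjF, hmin, heq⟩ := exists_rep hg0 hfin n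
  rw [heq]
  by_cases hSF : S = F
  · exact hc j (hSF ▸ hjF)
  · have : (S \ F).Nonempty := by
      rw [Finset.sdiff_nonempty]
      intro hsub
      exact hSF (Finset.eq_of_subset_of_card_le hsub (by omega))
    obtain ⟨s, hs⟩ := this
    obtain ⟨hsS, hsF⟩ := Finset.mem_sdiff.mp hs
    exact (hc s hsS).trans (htop s hsF j hjF)

lemma genDiff_upper (hg0 : ∀ i, 0 ≤ g i) (hfin : ∀ ε > 0, {i | ε ≤ g i}.Finite)
    {n : ℕ} {G : Finset ι} (hG : G.card ≤ n) {c : ℝ} (hc : ∀ i ∉ G, g i ≤ c) :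
    genDiff g n ≤ c := by
  obtain ⟨F, j, htop, hcard, hjF, hmin, heq⟩ := exists_rep hg0 hfin n
  have : (F \ G).Nonempty := by
    rw [Finset.sdiff_nonempty]
    intro hsub
    have := Finset.card_le_card hsub
    omega
  obtain ⟨i, hi⟩ := this
  obtain ⟨hiF, hiG⟩ := Finset.mem_sdiff.mp hi
  rw [heq]
  exact (hmin i hiF).trans (hc i hiG)

lemma genDiff_small (hg0 : ∀ i, 0 ≤ g i) (hfin : ∀ ε > 0, {i | ε ≤ g i}.Finite)
    {ε : ℝ} (hε : 0 < ε) : ∃ N : ℕ, ∀ n ≥ N, genDiff g n < ε := by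
  have hT := hfin ε hε
  refine ⟨hT.toFinset.card, fun n hn => ?_⟩
  obtain ⟨F, j, htop, hcard, hjF, hmin, heq⟩ := exists_rep hg0 hfin n
  have : (F \ hT.toFinset).Nonempty := by
    rw [Finset.sdiff_nonempty]
    intro hsub
    have := Finset.card_le_card hsub
    omega
  obtain ⟨i, hi⟩ := this
  obtain ⟨hiF, hiT⟩ := Finset.mem_sdiff.mp hi
  have : ¬ ε ≤ g i := by simpa [Set.Finite.mem_toFinset] using hiT
  rw [heq]
  exact lt_of_le_of_lt (hmin i hiF) (lt_of_not_ge this)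

lemma genDiff_antitone (hg0 : ∀ i, 0 ≤ g i) (hfin : ∀ ε > 0, {i | ε ≤ g i}.Finite) :
    Antitone (genDiff g) := by
  apply antitone_nat_of_succ_le
  intro n
  obtain ⟨F₁, j₁, htop₁, hcard₁, hj₁F, hmin₁, heq₁⟩ := exists_rep hg0 hfin n
  obtain ⟨F₂, j₂, htop₂, hcard₂, hj₂F, hmin₂, heq₂⟩ := exists_rep hg0 hfin (n + 1)
  rw [heq₁, heq₂]
  have : (F₂ \ F₁).Nonempty := by
    rw [Finset.sdiff_nonempty]
    intro hsub
    have := Finset.card_le_card hsub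
    omega
  obtain ⟨s, hs⟩ := this
  obtain ⟨hsF₂, hsF₁⟩ := Finset.mem_sdiff.mp hs
  exact (hmin₂ s hsF₂).trans (htop₁ s hsF₁ j₁ hj₁F)

lemma exists_bigset (hg0 : ∀ i, 0 ≤ g i) (hfin : ∀ ε > 0, {i | ε ≤ g i}.Finite) (n : ℕ) :
    ∃ G : Finset ι, G.card = n ∧ ∀ i ∉ G, g i ≤ genDiff g n := by
  obtain ⟨F, j, htop, hcard, hjF, hmin, heq⟩ := exists_rep hg0 hfin n
  refine ⟨F.erase j, by rw [Finset.card_erase_of_mem hjF, hcard]; rfl, fun i hi => ?_⟩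
  rw [heq]
  by_cases hij : i = j
  · exact hij ▸ le_refl _
  · exact htop i (fun hiF => hi (Finset.mem_erase.mpr ⟨hij, hiF⟩)) j hjF

lemma genDiff_subadd {g g₁ g₂ : ι → ℝ}
    (hg0 : ∀ i, 0 ≤ g i) (hfin : ∀ ε > 0, {i | ε ≤ g i}.Finite)
    (hg10 : ∀ i, 0 ≤ g₁ i) (hfin1 : ∀ ε > 0, {i | ε ≤ g₁ i}.Finite)
    (hg20 : ∀ i, 0 ≤ g₂ i) (hfin2 : ∀ ε > 0, {i | ε ≤ g₂ i}.Finite)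
    (hle : ∀ i, g i ≤ g₁ i + g₂ i) (p q : ℕ) :
    genDiff g (p + q) ≤ genDiff g₁ p + genDiff g₂ q := by
  obtain ⟨G₁, hG₁card, hG₁⟩ := exists_bigset hg10 hfin1 p
  obtain ⟨G₂, hG₂card, hG₂⟩ := exists_bigset hg20 hfin2 q
  have hcard : (G₁ ∪ G₂).card ≤ p + q := by
    calc (G₁ ∪ G₂).card ≤ G₁.card + G₂.card := Finset.card_union_le _ _
      _ = p + q := by rw [hG₁card, hG₂card]
  apply genDiff_upper hg0 hfin hcard
  intro i hi
  rw [Finset.mem_union] at hi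
  push_neg at hi
  exact (hle i).trans (add_le_add (hG₁ i hi.1) (hG₂ i hi.2))

lemma genDiff_smul (hg0 : ∀ i, 0 ≤ g i) (hfin : ∀ ε > 0, {i | ε ≤ g i}.Finite)
    {c : ℝ} (hc : 0 ≤ c) (n : ℕ) :
    genDiff (fun i => c * g i) n = c * genDiff g n := by
  have key : ∀ m : ℕ, genSum (fun i => c * g i) m = c * genSum g m := by
    intro m
    obtain ⟨F, hcard, htop⟩ := exists_top hg0 hfin m
    have htop' : TopSet (fun i => c * g i) F := fun i hi j hj =>
      mul_le_mul_of_nonneg_left (htop i hi j hj) hc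
    rw [← hcard, genSum_eq htop, genSum_eq htop', Finset.mul_sum]
  rw [genDiff, genDiff, key, key]
  ring

lemma genDiff_of_antitone {g : ℕ → ℝ} (hmono : Antitone g) (n : ℕ) :
    genDiff g n = g n := by
  have htop : TopSet g (Finset.range (n + 1)) := by
    intro i hi j hj
    rw [Finset.mem_range] at hi hj
    exact hmono (by omega)
  have hmin : ∀ k ∈ Finset.range (n + 1), g n ≤ g k := fun k hk =>
    hmono (by rw [Finset.mem_range] at hk; omega)
  exact genDiff_eq htop (Finset.card_range _) (Finset.self_mem_range_succ n) hmin

-- now concrete facts about complex null sequences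
lemma c0_fin {β : ℕ → ℂ} (hβ : β ∈ c0) :
    ∀ ε > 0, {i : ℕ | ε ≤ ‖β i‖}.Finite := by
  intro ε hε
  have h := hβ.eventually (Metric.ball_mem_nhds (0 : ℂ) hε)
  rw [Filter.eventually_atTop] at h
  obtain ⟨N, hN⟩ := h
  apply Set.Finite.subset (Set.finite_Iio N)
  intro i hi
  rw [Set.mem_Iio]
  by_contra hc
  have h2 : ‖β i‖ < ε := by simpa using hN i (by omega)
  rw [Set.mem_setOf_eq] at hi
  linarith

lemma rearr_eq_genDiff (β : ℕ → ℂ) (n : ℕ) : rearr β n = genDiff (fun i => ‖β i‖) n := rfl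

lemma rearrSum_eq_genSum (β : ℕ → ℂ) (n : ℕ) : rearrSum β n = genSum (fun i => ‖β i‖) n := rfl

lemma tensorSeq_eq_genDiff (α β : ℕ → ℂ) (n : ℕ) :
    tensorSeq α β n = genDiff (fun p : ℕ × ℕ => ‖α p.1‖ * ‖β p.2‖) n := rfl

lemma rpow_neg_anti {lam x y : ℝ} (hlam : 0 < lam) (hx : 0 < x) (hxy : x ≤ y) :
    y ^ (-lam) ≤ x ^ (-lam) := by
  have hy : 0 < y := lt_of_lt_of_le hx hxy
  rw [Real.rpow_neg hx.le, Real.rpow_neg hy.le]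
  exact inv_anti₀ (Real.rpow_pos_of_pos hx lam) (Real.rpow_le_rpow hx.le hxy hlam.le)

lemma half_bound {lam : ℝ} (hlam : 0 < lam) {p n : ℕ} (hp : n ≤ 2 * p + 1) :
    ((p : ℝ) + 1) ^ (-lam) ≤ 2 ^ lam * ((n : ℝ) + 1) ^ (-lam) := by
  have h1 : ((n : ℝ) + 1) / 2 ≤ (p : ℝ) + 1 := by
    have : (n : ℝ) ≤ 2 * (p : ℝ) + 1 := by exact_mod_cast hp
    linarith
  have h2 : (0 : ℝ) < ((n : ℝ) + 1) / 2 := by positivity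
  calc ((p : ℝ) + 1) ^ (-lam) ≤ (((n : ℝ) + 1) / 2) ^ (-lam) := rpow_neg_anti hlam h2 h1
    _ = 2 ^ lam * ((n : ℝ) + 1) ^ (-lam) := by
        rw [Real.div_rpow (by positivity) (by norm_num), Real.rpow_neg (by norm_num : (0:ℝ) ≤ 2),
          div_eq_mul_inv, inv_inv]
        ring


end Machinery

/-- For every `λ > 0`, the principal Calkin space generated by the
sequence `(n^{-λ})_{n=1}^∞` is not stable. -/
theorem principal_pow_not_stable (lam : ℝ) (hlam : 0 < lam) :
    ¬ IsStableCalkin (principalCalkin (toC fun n => ((n : ℝ) + 1) ^ (-lam))) := by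
  set a : ℕ → ℂ := toC fun n => ((n : ℝ) + 1) ^ (-lam) with ha
  rintro ⟨hcalk, heq⟩
  -- basic facts about the generating sequence
  have hga : ∀ i : ℕ, ‖a i‖ = ((i : ℝ) + 1) ^ (-lam) := by
    intro i
    have h1 : (0:ℝ) ≤ ((i : ℝ) + 1) ^ (-lam) := Real.rpow_nonneg (by positivity) _
    simp [ha, toC, abs_of_nonneg h1]
  have hganti : Antitone fun i : ℕ => ‖a i‖ := by
    intro i j hij
    simp only [hga]
    have : (i:ℝ) ≤ (j:ℝ) := by exact_mod_cast hij
    exact rpow_neg_anti hlam (by positivity) (by linarith)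
  have hale : ∀ i : ℕ, ‖a i‖ ≤ 1 := by
    intro i
    rw [hga]
    calc ((i:ℝ)+1) ^ (-lam) ≤ (1:ℝ) ^ (-lam) :=
          rpow_neg_anti hlam one_pos (by have : (0:ℝ) ≤ (i:ℝ) := Nat.cast_nonneg i; linarith)
      _ = 1 := Real.one_rpow _
  have hac0 : a ∈ c0 := by
    have h1 : Filter.Tendsto (fun i : ℕ => ((i:ℝ)+1) ^ (-lam)) Filter.atTop (nhds 0) :=
      (tendsto_rpow_neg_atTop hlam).comp
        (Filter.tendsto_atTop_add_const_right Filter.atTop 1 tendsto_natCast_atTop_atTop)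
    have h2 := (Complex.continuous_ofReal.tendsto 0).comp h1
    exact h2
  have hafin : ∀ ε > 0, {i : ℕ | ε ≤ ‖a i‖}.Finite := c0_fin hac0
  -- the product double sequence
  set h : ℕ × ℕ → ℝ := fun p => ‖a p.1‖ * ‖a p.2‖ with hh
  have hh0 : ∀ p, 0 ≤ h p := fun p => mul_nonneg (norm_nonneg _) (norm_nonneg _)
  have hhfin : ∀ ε > 0, {p : ℕ × ℕ | ε ≤ h p}.Finite := by
    intro ε hε
    apply Set.Finite.subset ((hafin ε hε).prod (hafin ε hε))
    rintro ⟨i, j⟩ hp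
    rw [Set.mem_setOf_eq] at hp
    constructor
    · refine le_trans hp ?_
      calc h (i, j) = ‖a i‖ * ‖a j‖ := rfl
        _ ≤ ‖a i‖ * 1 := mul_le_mul_of_nonneg_left (hale j) (norm_nonneg _)
        _ = ‖a i‖ := mul_one _
    · refine le_trans hp ?_
      calc h (i, j) = ‖a i‖ * ‖a j‖ := rfl
        _ ≤ 1 * ‖a j‖ := mul_le_mul_of_nonneg_right (hale i) (norm_nonneg _)
        _ = ‖a j‖ := one_mul _
  -- the tensor sequence
  set γ : ℕ → ℂ := toC (tensorSeq a a) with hγ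
  have hγn : ∀ k, ‖γ k‖ = genDiff h k := by
    intro k
    have h1 := genDiff_nonneg hh0 hhfin k
    have h2 : tensorSeq a a k = genDiff h k := tensorSeq_eq_genDiff a a k
    simp [hγ, toC, h2, abs_of_nonneg h1]
  have hγc0 : γ ∈ c0 := by
    rw [c0, Set.mem_setOf_eq, Metric.tendsto_atTop]
    intro ε hε
    obtain ⟨N, hN⟩ := genDiff_small hh0 hhfin hε
    exact ⟨N, fun n hn => by rw [dist_zero_right, hγn]; exact hN n hn⟩
  have hrearrγ : ∀ n, rearr γ n = genDiff h n := by
    intro n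
    rw [rearr_eq_genDiff]
    have hfun : (fun k => ‖γ k‖) = genDiff h := funext hγn
    rw [hfun]
    exact genDiff_of_antitone (genDiff_antitone hh0 hhfin) n
  have hrearra : ∀ n, rearr a n = ((n:ℝ)+1) ^ (-lam) := by
    intro n
    rw [rearr_eq_genDiff, genDiff_of_antitone hganti, hga]
  -- the test Calkin space
  set K : Set (ℕ → ℂ) :=
    {β | β ∈ c0 ∧ ∃ C : ℝ, ∀ n, rearr β n ≤ C * ((n:ℝ)+1) ^ (-lam)} with hKdef
  have hrpow1 : ((0:ℕ):ℝ) + 1 = 1 := by norm_num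
  have hrearr_nonneg : ∀ β : ℕ → ℂ, β ∈ c0 → ∀ n, 0 ≤ rearr β n := by
    intro β hβ n
    rw [rearr_eq_genDiff]
    exact genDiff_nonneg (fun i => norm_nonneg _) (c0_fin hβ) n
  have hKcalkin : IsCalkinSpace K := by
    refine ⟨fun β hβ => hβ.1, ?_, ?_, ?_, ?_⟩
    · -- zero
      refine ⟨tendsto_const_nhds, 0, fun n => ?_⟩
      rw [zero_mul, rearr_eq_genDiff]
      apply genDiff_upper (g := fun i => ‖(0 : ℕ → ℂ) i‖)
        (fun i => norm_nonneg _) ?_ (G := ∅) (by simp) (fun i _ => by simp)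
      intro ε hε
      have : {i : ℕ | ε ≤ ‖(0 : ℕ → ℂ) i‖} = ∅ := by
        ext i; simp; linarith
      rw [this]; exact Set.finite_empty
    · -- addition
      rintro β ⟨hβc0, C₁, hC₁⟩ δ ⟨hδc0, C₂, hC₂⟩
      have hβδc0 : β + δ ∈ c0 := by
        have := Filter.Tendsto.add hβc0 hδc0
        simp at this; exact this
      have hC₁0 : 0 ≤ C₁ := by
        have := hC₁ 0
        rw [hrpow1, Real.one_rpow, mul_one] at this
        exact le_trans (hrearr_nonneg β hβc0 0) this
      have hC₂0 : 0 ≤ C₂ := by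
        have := hC₂ 0
        rw [hrpow1, Real.one_rpow, mul_one] at this
        exact le_trans (hrearr_nonneg δ hδc0 0) this
      refine ⟨hβδc0, 2 ^ lam * (C₁ + C₂), fun n => ?_⟩
      have hpq : n / 2 + (n - n / 2) = n := by omega
      have hsub := genDiff_subadd (g := fun i => ‖(β + δ) i‖)
        (g₁ := fun i => ‖β i‖) (g₂ := fun i => ‖δ i‖)
        (fun i => norm_nonneg _) (c0_fin hβδc0)
        (fun i => norm_nonneg _) (c0_fin hβc0)
        (fun i => norm_nonneg _) (c0_fin hδc0)
        (fun i => norm_add_le (β i) (δ i)) (n / 2) (n - n / 2)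
      rw [hpq] at hsub
      have hb1 : genDiff (fun i => ‖β i‖) (n / 2) ≤ C₁ * (2 ^ lam * ((n:ℝ)+1) ^ (-lam)) := by
        refine le_trans (hC₁ (n / 2)) ?_
        exact mul_le_mul_of_nonneg_left (half_bound hlam (by omega)) hC₁0
      have hb2 : genDiff (fun i => ‖δ i‖) (n - n / 2) ≤ C₂ * (2 ^ lam * ((n:ℝ)+1) ^ (-lam)) := by
        refine le_trans (hC₂ (n - n / 2)) ?_
        exact mul_le_mul_of_nonneg_left (half_bound hlam (by omega)) hC₂0
      calc rearr (β + δ) n = genDiff (fun i => ‖(β + δ) i‖) n := rfl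
        _ ≤ genDiff (fun i => ‖β i‖) (n / 2) + genDiff (fun i => ‖δ i‖) (n - n / 2) := hsub
        _ ≤ C₁ * (2 ^ lam * ((n:ℝ)+1) ^ (-lam)) + C₂ * (2 ^ lam * ((n:ℝ)+1) ^ (-lam)) :=
            add_le_add hb1 hb2
        _ = 2 ^ lam * (C₁ + C₂) * ((n:ℝ)+1) ^ (-lam) := by ring
    · -- scalar multiplication
      rintro c β ⟨hβc0, C, hC⟩
      have hcβc0 : c • β ∈ c0 := by
        have := Filter.Tendsto.const_smul hβc0 c
        simp at this; exact this
      refine ⟨hcβc0, ‖c‖ * C, fun n => ?_⟩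
      have hfun : (fun i => ‖(c • β) i‖) = fun i => ‖c‖ * ‖β i‖ := by
        funext i
        rw [Pi.smul_apply, norm_smul]
      calc rearr (c • β) n = genDiff (fun i => ‖(c • β) i‖) n := rfl
        _ = genDiff (fun i => ‖c‖ * ‖β i‖) n := by rw [hfun]
        _ = ‖c‖ * genDiff (fun i => ‖β i‖) n :=
            genDiff_smul (fun i => norm_nonneg _) (c0_fin hβc0) (norm_nonneg c) n
        _ ≤ ‖c‖ * (C * ((n:ℝ)+1) ^ (-lam)) :=
            mul_le_mul_of_nonneg_left (hC n) (norm_nonneg c)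
        _ = ‖c‖ * C * ((n:ℝ)+1) ^ (-lam) := by ring
    · -- domination
      rintro δ ⟨hδc0, C, hC⟩ β hβc0 hdom
      exact ⟨hβc0, C, fun n => le_trans (hdom n) (hC n)⟩
  have haK : a ∈ K := ⟨hac0, 1, fun n => by rw [hrearra n, one_mul]⟩
  have haI : a ∈ principalCalkin a := fun K' hK' => hK'.2
  have hγtensor : γ ∈ calkinTensor (principalCalkin a) (principalCalkin a) :=
    fun K' hK' => hK'.2 a haI a haI
  have hγI : γ ∈ principalCalkin a := heq ▸ hγtensor
  have hγK : γ ∈ K := hγI K ⟨hKcalkin, haK⟩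
  obtain ⟨-, C, hC⟩ := hγK
  replace hC : ∀ n, genDiff h n ≤ C * ((n:ℝ)+1) ^ (-lam) := fun n => by
    rw [← hrearrγ n]; exact hC n
  -- quantitative contradiction
  have ha0 : ‖a 0‖ = 1 := by rw [hga, hrpow1, Real.one_rpow]
  have hC1 : 1 ≤ C := by
    have hlow0 : (1:ℝ) ≤ genDiff h 0 := by
      apply genDiff_lower hh0 hhfin (S := {((0:ℕ), (0:ℕ))}) (Finset.card_singleton _)
      intro p hp
      rw [Finset.mem_singleton] at hp
      subst hp
      have hval : h (0, 0) = 1 := by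
        show ‖a 0‖ * ‖a 0‖ = 1
        rw [ha0]; norm_num
      rw [hval]
    have := hC 0
    rw [hrpow1, Real.one_rpow, mul_one] at this
    linarith
  have hC0 : (0:ℝ) < C := by linarith
  set T : ℝ := (2 * C) ^ (1 / lam) with hT
  have h2C1 : (1:ℝ) ≤ 2 * C := by linarith
  have hT1 : 1 ≤ T := by
    rw [hT]
    calc (1:ℝ) = (2 * C) ^ (0:ℝ) := (Real.rpow_zero _).symm
      _ ≤ (2 * C) ^ (1 / lam) :=
          Real.rpow_le_rpow_of_exponent_le h2C1 (by positivity)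
  have hT0 : (0:ℝ) < T := lt_of_lt_of_le one_pos hT1
  have hTlam : T ^ lam = 2 * C := by
    rw [hT, ← Real.rpow_mul (by linarith), one_div, inv_mul_cancel₀ hlam.ne', Real.rpow_one]
  obtain ⟨Kn, hKn⟩ :=
    (Real.tendsto_sum_range_one_div_nat_succ_atTop.eventually_ge_atTop (T + 1)).exists
  set M : ℕ := max Kn 1 with hM
  have hMK : Kn ≤ M := le_max_left _ _
  have hM1 : 1 ≤ M := le_max_right _ _
  have hMpos : (0:ℝ) < (M:ℝ) := by exact_mod_cast hM1
  set N : ℕ := ∑ i ∈ Finset.range M, M / (i + 1) with hN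
  have hterm : ∀ i : ℕ, (M:ℝ) / ((i:ℝ) + 1) - 1 ≤ ((M / (i + 1) : ℕ) : ℝ) := by
    intro i
    have hd : 0 < i + 1 := Nat.succ_pos i
    have h1 : M < (i + 1) * (M / (i + 1)) + (i + 1) := by
      have h2 := Nat.div_add_mod M (i + 1)
      have h3 := Nat.mod_lt M hd
      omega
    have h2 : (M:ℝ) < ((i:ℝ) + 1) * ((M / (i + 1) : ℕ) : ℝ) + ((i:ℝ) + 1) := by
      exact_mod_cast h1
    have h3 : (0:ℝ) < (i:ℝ) + 1 := by positivity
    rw [sub_le_iff_le_add, div_le_iff₀ h3]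
    nlinarith
  have hsum : (N:ℝ) = ∑ i ∈ Finset.range M, ((M / (i + 1) : ℕ) : ℝ) := by
    rw [hN]; push_cast; ring
  have hNM : (M:ℝ) * T ≤ (N:ℝ) := by
    have hstep1 : ∑ i ∈ Finset.range Kn, ((M / (i + 1) : ℕ) : ℝ) ≤ (N:ℝ) := by
      rw [hsum]
      apply Finset.sum_le_sum_of_subset_of_nonneg (Finset.range_subset_range.mpr hMK)
      intros
      positivity
    have hstep2 : ∑ i ∈ Finset.range Kn, ((M:ℝ) / ((i:ℝ) + 1) - 1)
        ≤ ∑ i ∈ Finset.range Kn, ((M / (i + 1) : ℕ) : ℝ) :=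
      Finset.sum_le_sum (fun i _ => hterm i)
    have hexp : ∑ i ∈ Finset.range Kn, ((M:ℝ) / ((i:ℝ) + 1) - 1)
        = (M:ℝ) * ∑ i ∈ Finset.range Kn, 1 / ((i:ℝ) + 1) - Kn := by
      rw [Finset.sum_sub_distrib]
      congr 1
      · rw [Finset.mul_sum]
        apply Finset.sum_congr rfl
        intros
        rw [mul_one_div]
      · simp
    have hKnM : (Kn:ℝ) ≤ (M:ℝ) := by exact_mod_cast hMK
    have hH : (M:ℝ) * (T + 1) ≤ (M:ℝ) * ∑ i ∈ Finset.range Kn, 1 / ((i:ℝ) + 1) :=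
      mul_le_mul_of_nonneg_left hKn hMpos.le
    nlinarith [hstep1, hstep2, hexp.le, hexp.ge]
  have hN1 : 1 ≤ N := by
    have hM1R : (1:ℝ) ≤ (M:ℝ) := by exact_mod_cast hM1
    have h1 : (1:ℝ) ≤ (N:ℝ) := by nlinarith
    exact_mod_cast h1
  set S : Finset (ℕ × ℕ) :=
    (Finset.range M).biUnion (fun i => {i} ×ˢ Finset.range (M / (i + 1))) with hS
  have hScard : S.card = N := by
    rw [hS, Finset.card_biUnion]
    · rw [hN]
      apply Finset.sum_congr rfl
      intro i _
      rw [Finset.card_product, Finset.card_singleton, Finset.card_range, one_mul]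
    · intro i _ j _ hij
      rw [Function.onFun, Finset.disjoint_left]
      rintro ⟨x, y⟩ hx hy
      rw [Finset.mem_product, Finset.mem_singleton] at hx hy
      exact hij (hx.1 ▸ hy.1 ▸ rfl)
  have hSbound : ∀ p ∈ S, (M:ℝ) ^ (-lam) ≤ h p := by
    rintro ⟨x, y⟩ hp
    rw [hS, Finset.mem_biUnion] at hp
    obtain ⟨i, hi, hmem⟩ := hp
    rw [Finset.mem_product, Finset.mem_singleton, Finset.mem_range] at hmem
    obtain ⟨hx, hy⟩ := hmem
    simp only at hx hy
    subst hx
    have hxy : (x + 1) * (y + 1) ≤ M := by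
      have h1 : y + 1 ≤ M / (x + 1) := hy
      calc (x + 1) * (y + 1) ≤ (x + 1) * (M / (x + 1)) := Nat.mul_le_mul_left _ h1
        _ ≤ M := Nat.mul_div_le M (x + 1)
    have hval : h (x, y) = (((x:ℝ) + 1) * ((y:ℝ) + 1)) ^ (-lam) := by
      show ‖a x‖ * ‖a y‖ = _
      rw [hga, hga, ← Real.mul_rpow (by positivity) (by positivity)]
    rw [hval]
    apply rpow_neg_anti hlam (by positivity)
    calc ((x:ℝ) + 1) * ((y:ℝ) + 1) = (((x + 1) * (y + 1) : ℕ) : ℝ) := by push_cast; ring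
      _ ≤ (M:ℝ) := by exact_mod_cast hxy
  have hNcard : S.card = (N - 1) + 1 := by rw [hScard]; omega
  have hlow : (M:ℝ) ^ (-lam) ≤ genDiff h (N - 1) :=
    genDiff_lower hh0 hhfin hNcard hSbound
  have hup : genDiff h (N - 1) ≤ C * (N:ℝ) ^ (-lam) := by
    have h1 := hC (N - 1)
    have hcast : ((N - 1 : ℕ) : ℝ) + 1 = (N:ℝ) := by
      rw [Nat.cast_sub hN1]
      push_cast
      ring
    rwa [hcast] at h1
  have hMT : (0:ℝ) < (M:ℝ) * T := by positivity
  have h5 : (N:ℝ) ^ (-lam) ≤ ((M:ℝ) * T) ^ (-lam) := rpow_neg_anti hlam hMT hNM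
  have h6 : ((M:ℝ) * T) ^ (-lam) = (M:ℝ) ^ (-lam) * T ^ (-lam) :=
    Real.mul_rpow hMpos.le hT0.le
  have h7 : T ^ (-lam) = (2 * C)⁻¹ := by
    rw [Real.rpow_neg hT0.le, hTlam]
  have hMl : (0:ℝ) < (M:ℝ) ^ (-lam) := Real.rpow_pos_of_pos hMpos _
  have hfinal : (M:ℝ) ^ (-lam) ≤ (M:ℝ) ^ (-lam) / 2 := by
    calc (M:ℝ) ^ (-lam) ≤ C * (N:ℝ) ^ (-lam) := le_trans hlow hup
      _ ≤ C * ((M:ℝ) ^ (-lam) * (2 * C)⁻¹) := by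
          rw [← h7, ← h6]
          exact mul_le_mul_of_nonneg_left h5 hC0.le
      _ = (M:ℝ) ^ (-lam) / 2 := by
          field_simp
  linarith
end
end

section
/- The principal Calkin space ⟨α⟩ generated by the sequence α = (1/log₂(n+1))_{n=1}^∞ is stable. -/
open scoped BigOperators

noncomputable section

section Aux

open Filter Finset

/-- norm-boundedness of a null sequence -/
lemma c0_bound {β : ℕ → ℂ} (hβ : β ∈ c0) : ∃ B : ℝ, 0 ≤ B ∧ ∀ i, ‖β i‖ ≤ B := by
  have h : Filter.Tendsto (fun i => ‖β i‖) Filter.atTop (nhds 0) := by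
    simpa using hβ.norm
  obtain ⟨B, hB⟩ := h.bddAbove_range
  exact ⟨B, le_trans (norm_nonneg _) (hB ⟨0, rfl⟩), fun i => hB ⟨i, rfl⟩⟩

lemma rearr_set_nonempty (β : ℕ → ℂ) (n : ℕ) :
    ((fun F : Finset ℕ => ∑ i ∈ F, ‖β i‖) '' {F | F.card = n}).Nonempty :=
  ⟨_, ⟨Finset.range n, Finset.card_range n, rfl⟩⟩

lemma rearr_set_bddAbove {β : ℕ → ℂ} {B : ℝ} (hB : ∀ i, ‖β i‖ ≤ B) (n : ℕ) :
    BddAbove ((fun F : Finset ℕ => ∑ i ∈ F, ‖β i‖) '' {F | F.card = n}) := by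
  refine ⟨n * B, ?_⟩
  rintro x ⟨F, hF, rfl⟩
  calc ∑ i ∈ F, ‖β i‖ ≤ ∑ _i ∈ F, B := Finset.sum_le_sum (fun i _ => hB i)
    _ = n * B := by rw [Finset.sum_const, hF]; ring

lemma le_rearrSum {β : ℕ → ℂ} {B : ℝ} (hB : ∀ i, ‖β i‖ ≤ B) {F : Finset ℕ} {n : ℕ}
    (hF : F.card = n) : ∑ i ∈ F, ‖β i‖ ≤ rearrSum β n :=
  le_csSup (rearr_set_bddAbove hB n) ⟨F, hF, rfl⟩

lemma rearrSum_le {β : ℕ → ℂ} {n : ℕ} {M : ℝ} (hM : 0 ≤ M)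
    (h : ∀ F : Finset ℕ, F.card = n → ∑ i ∈ F, ‖β i‖ ≤ M) : rearrSum β n ≤ M := by
  apply Real.sSup_le _ hM
  rintro x ⟨F, hF, rfl⟩
  exact h F hF

lemma rearrSum_zero (β : ℕ → ℂ) : rearrSum β 0 = 0 := by
  have : ((fun F : Finset ℕ => ∑ i ∈ F, ‖β i‖) '' {F | F.card = 0}) = {0} := by
    ext x
    constructor
    · rintro ⟨F, hF, rfl⟩
      simp only [Set.mem_setOf_eq, Finset.card_eq_zero] at hF
      simp [hF]
    · rintro rfl
      exact ⟨∅, by simp⟩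
  rw [rearrSum, this, csSup_singleton]

lemma rearrSum_nonneg {β : ℕ → ℂ} {B : ℝ} (hB : ∀ i, ‖β i‖ ≤ B) (n : ℕ) :
    0 ≤ rearrSum β n :=
  le_trans (Finset.sum_nonneg (fun i _ => norm_nonneg _)) (le_rearrSum hB (Finset.card_range n))

lemma rearrSum_mono {β : ℕ → ℂ} {B : ℝ} (hB : ∀ i, ‖β i‖ ≤ B) (n : ℕ) :
    rearrSum β n ≤ rearrSum β (n + 1) := by
  apply rearrSum_le (rearrSum_nonneg hB _)
  intro F hF
  obtain ⟨j, hj⟩ := Infinite.exists_notMem_finset F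
  calc ∑ i ∈ F, ‖β i‖ ≤ ∑ i ∈ insert j F, ‖β i‖ := by
        rw [Finset.sum_insert hj]; exact le_add_of_nonneg_left (norm_nonneg _)
    _ ≤ rearrSum β (n + 1) := le_rearrSum hB (by rw [Finset.card_insert_of_notMem hj, hF])

lemma rearr_nonneg {β : ℕ → ℂ} {B : ℝ} (hB : ∀ i, ‖β i‖ ≤ B) (n : ℕ) :
    0 ≤ rearr β n := sub_nonneg.2 (rearrSum_mono hB n)

lemma rearrSum_eq_sum_rearr (β : ℕ → ℂ) (n : ℕ) :
    rearrSum β n = ∑ i ∈ Finset.range n, rearr β i := by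
  induction n with
  | zero => simp [rearrSum_zero]
  | succ n ih => rw [Finset.sum_range_succ, ← ih]; simp [rearr]

end Aux
section Aux2

open Filter Finset

lemma le_strictMono_fin {n : ℕ} {f : Fin n → ℕ} (hf : StrictMono f) :
    ∀ m : ℕ, ∀ h : m < n, m ≤ f ⟨m, h⟩ := by
  intro m
  induction m with
  | zero => exact fun h => Nat.zero_le _
  | succ m ih =>
    intro h
    have h' : m < n := Nat.lt_of_succ_lt h
    have h1 := ih h'
    have hlt : f ⟨m, h'⟩ < f ⟨m+1, h⟩ := hf (by simp [Fin.lt_def])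
    omega

/-- Rearrangement: sums of an antitone nonneg function over a finset are maximized on
initial segments. -/
lemma sum_antitone_le {f : ℕ → ℝ} (hf0 : ∀ n, 0 ≤ f n) (hfa : ∀ m n, m ≤ n → f n ≤ f m)
    (F : Finset ℕ) : ∑ i ∈ F, f i ≤ ∑ i ∈ Finset.range F.card, f i := by
  classical
  have h : F.card = F.card := rfl
  set e := F.orderIsoOfFin h with he
  have hsum : ∑ i ∈ F, f i = ∑ k : Fin F.card, f (e k) := by
    rw [← Finset.sum_coe_sort F f]
    exact (Fintype.sum_equiv e.toEquiv _ _ (fun k => rfl)).symm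
  have hsm : StrictMono (fun k : Fin F.card => ((e k : ℕ))) := by
    intro k k' hk
    exact_mod_cast e.strictMono hk
  rw [hsum, ← Fin.sum_univ_eq_sum_range]
  apply Finset.sum_le_sum
  intro k _
  exact hfa _ _ (by simpa using le_strictMono_fin hsm k.1 k.2)

/-- computation of `rearrSum` for sequences with antitone norms -/
lemma rearrSum_of_norm_antitone {β : ℕ → ℂ} {f : ℕ → ℝ} (hf0 : ∀ n, 0 ≤ f n)
    (hfa : ∀ m n, m ≤ n → f n ≤ f m) (hnorm : ∀ i, ‖β i‖ = f i) (n : ℕ) :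
    rearrSum β n = ∑ i ∈ Finset.range n, f i := by
  have hB : ∀ i, ‖β i‖ ≤ f 0 := fun i => by rw [hnorm]; exact hfa 0 i (Nat.zero_le i)
  apply le_antisymm
  · apply rearrSum_le (Finset.sum_nonneg (fun i _ => hf0 i))
    intro F hF
    calc ∑ i ∈ F, ‖β i‖ = ∑ i ∈ F, f i := Finset.sum_congr rfl (fun i _ => hnorm i)
      _ ≤ ∑ i ∈ Finset.range F.card, f i := sum_antitone_le hf0 hfa F
      _ = ∑ i ∈ Finset.range n, f i := by rw [hF]
  · calc ∑ i ∈ Finset.range n, f i = ∑ i ∈ Finset.range n, ‖β i‖ :=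
        Finset.sum_congr rfl (fun i _ => (hnorm i).symm)
    _ ≤ rearrSum β n := le_rearrSum hB (Finset.card_range n)

lemma rearr_of_norm_antitone {β : ℕ → ℂ} {f : ℕ → ℝ} (hf0 : ∀ n, 0 ≤ f n)
    (hfa : ∀ m n, m ≤ n → f n ≤ f m) (hnorm : ∀ i, ‖β i‖ = f i) (n : ℕ) :
    rearr β n = f n := by
  rw [rearr, rearrSum_of_norm_antitone hf0 hfa hnorm, rearrSum_of_norm_antitone hf0 hfa hnorm,
    Finset.sum_range_succ]
  ring

/-- averaging bound: `(n+1) ⬝ β*_{n+1} ≤ β*_1 + ⋯ + β*_{n+1}` -/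
lemma mul_rearr_le {β : ℕ → ℂ} {B : ℝ} (hB : ∀ i, ‖β i‖ ≤ B) (n : ℕ) :
    (n + 1 : ℝ) * rearr β n ≤ rearrSum β (n + 1) := by
  refine le_of_forall_pos_le_add ?_
  intro ε hε
  have hε' : 0 < ε / (n + 1) := by positivity
  obtain ⟨x, ⟨F, hF, rfl⟩, hx⟩ := exists_lt_of_lt_csSup (rearr_set_nonempty β (n+1))
    (show rearrSum β (n+1) - ε / (n+1) < rearrSum β (n+1) by linarith)
  simp only [Set.mem_setOf_eq] at hF
  have hne : F.Nonempty := Finset.card_pos.mp (by omega)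
  obtain ⟨i₀, hi₀, hmin⟩ := Finset.exists_min_image F (fun i => ‖β i‖) hne
  have h1 : (n + 1 : ℝ) * ‖β i₀‖ ≤ ∑ i ∈ F, ‖β i‖ := by
    have := Finset.card_nsmul_le_sum F (fun i => ‖β i‖) (‖β i₀‖) hmin
    rw [hF] at this
    simpa [nsmul_eq_mul] using this
  have h2 : ∑ i ∈ F, ‖β i‖ - ‖β i₀‖ ≤ rearrSum β n := by
    have herase : ∑ i ∈ F.erase i₀, ‖β i‖ + ‖β i₀‖ = ∑ i ∈ F, ‖β i‖ :=
      Finset.sum_erase_add F _ hi₀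
    have hcard : (F.erase i₀).card = n := by
      rw [Finset.card_erase_of_mem hi₀, hF]; omega
    have := le_rearrSum hB hcard
    linarith
  have h3 : ∑ i ∈ F, ‖β i‖ ≤ rearrSum β (n + 1) := le_rearrSum hB hF
  have hrr : rearr β n ≤ ε / (n+1) + ‖β i₀‖ := by
    rw [rearr]
    linarith
  have hn1 : (0:ℝ) < n + 1 := by positivity
  calc (n + 1 : ℝ) * rearr β n ≤ (n+1) * (ε / (n+1) + ‖β i₀‖) := by
        apply mul_le_mul_of_nonneg_left hrr (le_of_lt hn1)
    _ = ε + (n+1) * ‖β i₀‖ := by field_simp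
    _ ≤ ε + ∑ i ∈ F, ‖β i‖ := by linarith
    _ ≤ rearrSum β (n + 1) + ε := by linarith

/-- lower bound: if the first `n+1` entries all have norm `≥ v ≥ 0` then `β*_{n+1} ≥ v`. -/
lemma le_rearr_of_lb {β : ℕ → ℂ} {B : ℝ} (hB : ∀ i, ‖β i‖ ≤ B) {v : ℝ} (hv : 0 ≤ v) {n : ℕ}
    (h : ∀ i ≤ n, v ≤ ‖β i‖) : v ≤ rearr β n := by
  rw [rearr, le_sub_iff_add_le]
  refine le_of_forall_pos_le_add ?_
  intro ε hε
  obtain ⟨x, ⟨F, hF, rfl⟩, hx⟩ := exists_lt_of_lt_csSup (rearr_set_nonempty β n)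
    (show rearrSum β n - ε < rearrSum β n by linarith)
  simp only [Set.mem_setOf_eq] at hF
  have hns : ¬ (Finset.range (n+1) ⊆ F) := by
    intro hsub
    have := Finset.card_le_card hsub
    rw [hF, Finset.card_range] at this
    omega
  obtain ⟨i, hi, hiF⟩ := Finset.not_subset.mp hns
  have hins : (insert i F).card = n + 1 := by rw [Finset.card_insert_of_notMem hiF, hF]
  have hsum : v + ∑ j ∈ F, ‖β j‖ ≤ ∑ j ∈ insert i F, ‖β j‖ := by
    rw [Finset.sum_insert hiF]
    have := h i (by simpa using Nat.lt_succ_iff.mp (Finset.mem_range.mp hi))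
    linarith
  have := le_rearrSum hB hins
  linarith

/-- counting: `k` entries of norm `≥ t` force `rearrSum β k ≥ k t`. -/
lemma card_mul_le_rearrSum {β : ℕ → ℂ} {B : ℝ} (hB : ∀ i, ‖β i‖ ≤ B) {t : ℝ}
    {G : Finset ℕ} (hG : ∀ i ∈ G, t ≤ ‖β i‖) :
    (G.card : ℝ) * t ≤ rearrSum β G.card := by
  refine le_trans ?_ (le_rearrSum hB rfl)
  have := Finset.card_nsmul_le_sum G (fun i => ‖β i‖) t hG
  simpa [nsmul_eq_mul] using this

end Aux2
section Aux3

open Finset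

lemma pair_inj : Function.Injective (fun i : ℕ => (i, (0:ℕ))) := by
  intro a b h
  simpa using h

lemma tensor_set_nonempty (β γ : ℕ → ℂ) (n : ℕ) :
    ((fun F : Finset (ℕ×ℕ) => ∑ p ∈ F, ‖β p.1‖ * ‖γ p.2‖) '' {F | F.card = n}).Nonempty :=
  ⟨_, ⟨(Finset.range n).image (fun i => (i, 0)), by
    simp [Finset.card_image_of_injective _ pair_inj], rfl⟩⟩

lemma tensor_set_bddAbove {β γ : ℕ → ℂ} {Bβ Bγ : ℝ} (hBβ : ∀ i, ‖β i‖ ≤ Bβ)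
    (hBγ : ∀ i, ‖γ i‖ ≤ Bγ) (n : ℕ) :
    BddAbove ((fun F : Finset (ℕ×ℕ) => ∑ p ∈ F, ‖β p.1‖ * ‖γ p.2‖) '' {F | F.card = n}) := by
  have h0β : (0:ℝ) ≤ Bβ := le_trans (norm_nonneg (β 0)) (hBβ 0)
  have h0γ : (0:ℝ) ≤ Bγ := le_trans (norm_nonneg (γ 0)) (hBγ 0)
  refine ⟨n * (Bβ * Bγ), ?_⟩
  rintro x ⟨F, hF, rfl⟩
  calc ∑ p ∈ F, ‖β p.1‖ * ‖γ p.2‖ ≤ ∑ _p ∈ F, Bβ * Bγ :=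
      Finset.sum_le_sum (fun p _ => mul_le_mul (hBβ p.1) (hBγ p.2) (norm_nonneg _) h0β)
    _ = n * (Bβ * Bγ) := by rw [Finset.sum_const, hF]; ring

lemma le_tensorSum {β γ : ℕ → ℂ} {Bβ Bγ : ℝ} (hBβ : ∀ i, ‖β i‖ ≤ Bβ)
    (hBγ : ∀ i, ‖γ i‖ ≤ Bγ) {F : Finset (ℕ×ℕ)} {n : ℕ} (hF : F.card = n) :
    ∑ p ∈ F, ‖β p.1‖ * ‖γ p.2‖ ≤ tensorSum β γ n :=
  le_csSup (tensor_set_bddAbove hBβ hBγ n) ⟨F, hF, rfl⟩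

lemma tensorSum_le {β γ : ℕ → ℂ} {n : ℕ} {M : ℝ} (hM : 0 ≤ M)
    (h : ∀ F : Finset (ℕ×ℕ), F.card = n → ∑ p ∈ F, ‖β p.1‖ * ‖γ p.2‖ ≤ M) :
    tensorSum β γ n ≤ M := by
  apply Real.sSup_le _ hM
  rintro x ⟨F, hF, rfl⟩
  exact h F hF

lemma tensorSum_nonneg {β γ : ℕ → ℂ} {Bβ Bγ : ℝ} (hBβ : ∀ i, ‖β i‖ ≤ Bβ)
    (hBγ : ∀ i, ‖γ i‖ ≤ Bγ) (n : ℕ) : 0 ≤ tensorSum β γ n := by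
  refine le_trans ?_ (le_tensorSum hBβ hBγ
    (F := (Finset.range n).image (fun i => (i, 0)))
    (by rw [Finset.card_image_of_injective _ pair_inj, Finset.card_range]))
  positivity

lemma tensorSum_mono {β γ : ℕ → ℂ} {Bβ Bγ : ℝ} (hBβ : ∀ i, ‖β i‖ ≤ Bβ)
    (hBγ : ∀ i, ‖γ i‖ ≤ Bγ) (n : ℕ) : tensorSum β γ n ≤ tensorSum β γ (n + 1) := by
  apply tensorSum_le (tensorSum_nonneg hBβ hBγ _)
  intro F hF
  obtain ⟨p, hp⟩ := Infinite.exists_notMem_finset F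
  calc ∑ q ∈ F, ‖β q.1‖ * ‖γ q.2‖ ≤ ∑ q ∈ insert p F, ‖β q.1‖ * ‖γ q.2‖ := by
        rw [Finset.sum_insert hp]
        exact le_add_of_nonneg_left (mul_nonneg (norm_nonneg _) (norm_nonneg _))
    _ ≤ tensorSum β γ (n + 1) :=
      le_tensorSum hBβ hBγ (by rw [Finset.card_insert_of_notMem hp, hF])

lemma tensorSeq_nonneg {β γ : ℕ → ℂ} {Bβ Bγ : ℝ} (hBβ : ∀ i, ‖β i‖ ≤ Bβ)
    (hBγ : ∀ i, ‖γ i‖ ≤ Bγ) (n : ℕ) : 0 ≤ tensorSeq β γ n :=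
  sub_nonneg.2 (tensorSum_mono hBβ hBγ n)

/-- key counting principle: if at most `n` products exceed `t`, then `(β⊗γ)_{n+1} ≤ t`. -/
lemma tensorSeq_le_of_count {β γ : ℕ → ℂ} {Bβ Bγ : ℝ} (hBβ : ∀ i, ‖β i‖ ≤ Bβ)
    (hBγ : ∀ i, ‖γ i‖ ≤ Bγ) {t : ℝ} (ht : 0 ≤ t) {n : ℕ}
    (hfin : {p : ℕ × ℕ | t < ‖β p.1‖ * ‖γ p.2‖}.Finite)
    (hcard : {p : ℕ × ℕ | t < ‖β p.1‖ * ‖γ p.2‖}.ncard ≤ n) :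
    tensorSeq β γ n ≤ t := by
  classical
  rw [tensorSeq, sub_le_iff_le_add']
  apply tensorSum_le (by linarith [tensorSum_nonneg hBβ hBγ n])
  intro F hF
  have hex : ∃ p ∈ F, ¬ (t < ‖β p.1‖ * ‖γ p.2‖) := by
    by_contra hc
    push_neg at hc
    have hsub : (F : Set (ℕ×ℕ)) ⊆ {p : ℕ × ℕ | t < ‖β p.1‖ * ‖γ p.2‖} :=
      fun p hp => hc p (by simpa using hp)
    have := Set.ncard_le_ncard hsub hfin
    rw [Set.ncard_coe_finset, hF] at this
    omega
  obtain ⟨p, hp, hple⟩ := hex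
  push_neg at hple
  have herase : ∑ q ∈ F.erase p, ‖β q.1‖ * ‖γ q.2‖ + ‖β p.1‖ * ‖γ p.2‖
      = ∑ q ∈ F, ‖β q.1‖ * ‖γ q.2‖ := Finset.sum_erase_add F _ hp
  have hcard' : (F.erase p).card = n := by
    rw [Finset.card_erase_of_mem hp, hF]; omega
  have := le_tensorSum hBβ hBγ hcard'
  linarith

/-- lower bound for the tensor sequence from the first column. -/
lemma le_tensorSeq_of_lb {β γ : ℕ → ℂ} {Bβ Bγ : ℝ} (hBβ : ∀ i, ‖β i‖ ≤ Bβ)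
    (hBγ : ∀ i, ‖γ i‖ ≤ Bγ) {v : ℝ} {n : ℕ}
    (h : ∀ i ≤ n, v ≤ ‖β i‖ * ‖γ 0‖) : v ≤ tensorSeq β γ n := by
  classical
  rw [tensorSeq, le_sub_iff_add_le]
  refine le_of_forall_pos_le_add ?_
  intro ε hε
  obtain ⟨x, ⟨F, hF, rfl⟩, hx⟩ := exists_lt_of_lt_csSup (tensor_set_nonempty β γ n)
    (show tensorSum β γ n - ε < tensorSum β γ n by linarith)
  simp only [Set.mem_setOf_eq] at hF
  set Q := (Finset.range (n+1)).image (fun i => (i, (0:ℕ))) with hQ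
  have hQcard : Q.card = n + 1 := by
    rw [hQ, Finset.card_image_of_injective _ pair_inj, Finset.card_range]
  have hns : ¬ (Q ⊆ F) := by
    intro hsub
    have := Finset.card_le_card hsub
    rw [hQcard, hF] at this
    omega
  obtain ⟨p, hpQ, hpF⟩ := Finset.not_subset.mp hns
  obtain ⟨i, hi, rfl⟩ := Finset.mem_image.mp hpQ
  have hile : i ≤ n := Nat.lt_succ_iff.mp (Finset.mem_range.mp hi)
  have hins : (insert (i, (0:ℕ)) F).card = n + 1 := by
    rw [Finset.card_insert_of_notMem hpF, hF]
  have hsum : v + ∑ q ∈ F, ‖β q.1‖ * ‖γ q.2‖ ≤ ∑ q ∈ insert (i, (0:ℕ)) F, ‖β q.1‖ * ‖γ q.2‖ := by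
    rw [Finset.sum_insert hpF]
    have := h i hile
    simp only
    linarith
  have := le_tensorSum hBβ hBγ hins
  linarith

end Aux3
section Aux4

open Finset Real

/-- the generating sequence -/
def aseq (n : ℕ) : ℝ := 1 / Real.logb 2 ((n : ℝ) + 2)

lemma Lpos (n : ℕ) : 0 < Real.logb 2 ((n : ℝ) + 2) := by
  apply Real.logb_pos (by norm_num)
  have : (0:ℝ) ≤ (n:ℝ) := Nat.cast_nonneg n
  linarith

lemma L_ge_one (n : ℕ) : 1 ≤ Real.logb 2 ((n : ℝ) + 2) := by
  have h2 : Real.logb 2 2 = 1 := Real.logb_self_eq_one (by norm_num)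
  rw [← h2]
  rw [Real.logb_le_logb (by norm_num) (by norm_num) (by positivity)]
  have : (0:ℝ) ≤ (n:ℝ) := Nat.cast_nonneg n
  linarith

lemma L_mono {m n : ℕ} (h : m ≤ n) :
    Real.logb 2 ((m : ℝ) + 2) ≤ Real.logb 2 ((n : ℝ) + 2) := by
  rw [Real.logb_le_logb (by norm_num) (by positivity) (by positivity)]
  have : (m:ℝ) ≤ (n:ℝ) := Nat.cast_le.mpr h
  linarith

lemma aseq_pos (n : ℕ) : 0 < aseq n := by
  have := Lpos n
  rw [aseq]; positivity

lemma aseq_le_one (n : ℕ) : aseq n ≤ 1 := by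
  rw [aseq, div_le_one (Lpos n)]
  exact L_ge_one n

lemma aseq_anti {m n : ℕ} (h : m ≤ n) : aseq n ≤ aseq m := by
  rw [aseq, aseq]
  exact one_div_le_one_div_of_le (Lpos m) (L_mono h)

lemma aseq_zero : aseq 0 = 1 := by
  have h2 : Real.logb 2 2 = 1 := Real.logb_self_eq_one (by norm_num)
  rw [aseq]
  norm_num [h2]

lemma aseq_tendsto : Filter.Tendsto aseq Filter.atTop (nhds 0) := by
  have h1 : Filter.Tendsto (fun n : ℕ => Real.logb 2 ((n : ℝ) + 2)) Filter.atTop Filter.atTop := by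
    apply (Real.tendsto_logb_atTop (by norm_num)).comp
    apply Filter.tendsto_atTop_add_const_right
    exact tendsto_natCast_atTop_atTop
  have h2 := h1.inv_tendsto_atTop
  have h3 : aseq = (fun n : ℕ => Real.logb 2 ((n:ℝ)+2))⁻¹ := by
    funext n; simp [aseq, one_div]
  rw [h3]; exact h2

/-- key regularity estimate: `a_1 + ⋯ + a_{n+1} ≤ 8 (n+1) a_{n+1}`. -/
lemma sum_aseq_le (n : ℕ) :
    ∑ i ∈ Finset.range (n + 1), aseq i ≤ 8 * (n + 1) * aseq n := by
  set k := Nat.sqrt (n + 1) with hk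
  set L := Real.logb 2 ((n : ℝ) + 2) with hL
  have hLpos : 0 < L := Lpos n
  have hk1 : k ≤ n + 1 := Nat.sqrt_le_self (n + 1)
  have hsqnn : (0:ℝ) ≤ Real.sqrt ((n:ℝ) + 1) := Real.sqrt_nonneg _
  -- (k:ℝ) ≤ √(n+1)
  have hkreal : (k : ℝ) ≤ Real.sqrt ((n : ℝ) + 1) := by
    rw [Real.le_sqrt (by positivity) (by positivity)]
    have h1 : (k * k : ℕ) ≤ n + 1 := Nat.sqrt_le (n + 1)
    have h2 : ((k:ℝ) * (k:ℝ)) ≤ (n:ℝ) + 1 := by exact_mod_cast h1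
    nlinarith
  -- L ≤ 3 √(n+1)
  have hLsq : L ≤ 3 * Real.sqrt ((n:ℝ) + 1) := by
    have hlog2 : (2:ℝ)/3 ≤ Real.log 2 := by
      have := Real.log_two_gt_d9
      linarith
    have hsq2 : Real.sqrt ((n:ℝ)+2) ≤ Real.sqrt ((n:ℝ)+1) + 1 := by
      rw [Real.sqrt_le_left (by positivity)]
      have : ((n:ℝ)+1) ≤ (Real.sqrt ((n:ℝ)+1))^2 + 0 := by
        rw [Real.sq_sqrt (by positivity)]; linarith
      nlinarith [Real.sqrt_nonneg ((n:ℝ)+1)]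
    have hlogle : Real.log ((n:ℝ)+2) ≤ 2 * Real.sqrt ((n:ℝ)+1) := by
      have h1 : Real.log ((n:ℝ)+2) = 2 * Real.log (Real.sqrt ((n:ℝ)+2)) := by
        rw [Real.log_sqrt (by positivity)]; ring
      have h2 : Real.log (Real.sqrt ((n:ℝ)+2)) ≤ Real.sqrt ((n:ℝ)+2) - 1 :=
        Real.log_le_sub_one_of_pos (Real.sqrt_pos.mpr (by positivity))
      nlinarith
    rw [hL, Real.logb, div_le_iff₀ (by positivity : (0:ℝ) < Real.log 2)]
    nlinarith [Real.sqrt_nonneg ((n:ℝ)+1)]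
  -- k ≤ 3 (n+1) aseq n, i.e. k * L ≤ 3 (n+1)
  have hkL : (k:ℝ) * L ≤ 3 * ((n:ℝ) + 1) := by
    calc (k:ℝ) * L ≤ Real.sqrt ((n:ℝ)+1) * (3 * Real.sqrt ((n:ℝ)+1)) := by
          apply mul_le_mul hkreal hLsq (le_of_lt hLpos) hsqnn
      _ = 3 * ((n:ℝ)+1) := by
          rw [show Real.sqrt ((n:ℝ)+1) * (3 * Real.sqrt ((n:ℝ)+1))
              = 3 * (Real.sqrt ((n:ℝ)+1) * Real.sqrt ((n:ℝ)+1)) by ring,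
            Real.mul_self_sqrt (by positivity)]
  have hkb : (k:ℝ) ≤ 3 * ((n:ℝ)+1) * aseq n := by
    rw [aseq, ← hL]
    rw [show 3 * ((n:ℝ)+1) * (1/L) = 3 * ((n:ℝ)+1) / L by ring, le_div_iff₀ hLpos]
    exact hkL
  -- aseq k ≤ 2 * aseq n
  have haseqk : aseq k ≤ 2 * aseq n := by
    have hnk : ((n:ℝ) + 2) ≤ (((k:ℝ) + 2)) ^ 2 := by
      have h1 : n + 1 < (k + 1) * (k + 1) := Nat.lt_succ_sqrt (n+1)
      have h2 : ((n:ℝ) + 1) < ((k:ℝ)+1) * ((k:ℝ)+1) := by exact_mod_cast h1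
      nlinarith [(Nat.cast_nonneg k : (0:ℝ) ≤ (k:ℝ))]
    have hLk : L ≤ 2 * Real.logb 2 ((k:ℝ) + 2) := by
      calc L ≤ Real.logb 2 (((k:ℝ)+2)^2) := by
            rw [Real.logb_le_logb (by norm_num) (by positivity) (by positivity)]
            exact hnk
        _ = 2 * Real.logb 2 ((k:ℝ)+2) := by
            rw [Real.logb_pow]; norm_num
    rw [aseq, aseq, ← hL]
    rw [div_le_iff₀ (Lpos k)]
    rw [show 2 * (1/L) * Real.logb 2 ((k:ℝ)+2) = (2 * Real.logb 2 ((k:ℝ)+2)) / L by ring]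
    rw [le_div_iff₀ hLpos]
    linarith
  -- split the sum
  have hsplit : ∑ i ∈ Finset.range (n + 1), aseq i
      = ∑ i ∈ Finset.range k, aseq i + ∑ i ∈ Finset.Ico k (n+1), aseq i := by
    simp only [Finset.range_eq_Ico]
    exact (Finset.sum_Ico_consecutive aseq (Nat.zero_le k) hk1).symm
  have hb1 : ∑ i ∈ Finset.range k, aseq i ≤ (k:ℝ) := by
    calc ∑ i ∈ Finset.range k, aseq i ≤ ∑ _i ∈ Finset.range k, (1:ℝ) :=
          Finset.sum_le_sum (fun i _ => aseq_le_one i)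
      _ = (k:ℝ) := by simp
  have hb2 : ∑ i ∈ Finset.Ico k (n+1), aseq i ≤ ((n:ℝ)+1) * (2 * aseq n) := by
    calc ∑ i ∈ Finset.Ico k (n+1), aseq i ≤ ∑ _i ∈ Finset.Ico k (n+1), (2 * aseq n) := by
          apply Finset.sum_le_sum
          intro i hi
          exact le_trans (aseq_anti (Finset.mem_Ico.mp hi).1) haseqk
      _ = ((n+1-k : ℕ):ℝ) * (2 * aseq n) := by
          rw [Finset.sum_const, Nat.card_Ico, nsmul_eq_mul]
      _ ≤ ((n:ℝ)+1) * (2 * aseq n) := by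
          apply mul_le_mul_of_nonneg_right _ (by nlinarith [aseq_pos n])
          have : ((n+1-k:ℕ):ℝ) ≤ ((n+1 : ℕ):ℝ) := Nat.cast_le.mpr (Nat.sub_le _ _)
          push_cast at this ⊢
          linarith
  have hap := aseq_pos n
  calc ∑ i ∈ Finset.range (n + 1), aseq i
      ≤ (k:ℝ) + ((n:ℝ)+1) * (2 * aseq n) := by rw [hsplit]; linarith
    _ ≤ 3 * ((n:ℝ)+1) * aseq n + ((n:ℝ)+1) * (2 * aseq n) := by linarith
    _ ≤ 8 * ((n:ℝ)+1) * aseq n := by nlinarith [mul_pos (show (0:ℝ) < (n:ℝ)+1 by positivity) hap]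
  
end Aux4
section Aux5

open Finset Real

/-- the generator as a complex sequence -/
def alphaSeq : ℕ → ℂ := toC aseq

lemma alpha_norm (i : ℕ) : ‖alphaSeq i‖ = aseq i := by
  simp only [alphaSeq, toC, Complex.norm_real]
  exact abs_of_pos (aseq_pos i)

lemma alpha_c0 : alphaSeq ∈ c0 := by
  have h := (Complex.continuous_ofReal.tendsto 0).comp aseq_tendsto
  exact h

lemma rearrSum_alpha (n : ℕ) : rearrSum alphaSeq n = ∑ i ∈ Finset.range n, aseq i :=
  rearrSum_of_norm_antitone (fun i => (aseq_pos i).le) (fun m n h => aseq_anti h) alpha_norm n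

lemma rearr_alpha (n : ℕ) : rearr alphaSeq n = aseq n :=
  rearr_of_norm_antitone (fun i => (aseq_pos i).le) (fun m n h => aseq_anti h) alpha_norm n

lemma rearrSum_alpha_nonneg (n : ℕ) : 0 ≤ rearrSum alphaSeq n := by
  rw [rearrSum_alpha]
  exact Finset.sum_nonneg (fun i _ => (aseq_pos i).le)

lemma rearrSum_alpha_one : rearrSum alphaSeq 1 = 1 := by
  rw [rearrSum_alpha, Finset.sum_range_one, aseq_zero]

lemma rearrSum_alpha_le (n : ℕ) : rearrSum alphaSeq (n+1) ≤ 8 * ((n:ℝ)+1) * aseq n := by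
  rw [rearrSum_alpha]
  have := sum_aseq_le n
  push_cast at this ⊢
  linarith

lemma rearr_smul_alpha {r : ℝ} (hr : 0 ≤ r) (n : ℕ) :
    rearr ((r : ℂ) • alphaSeq) n = r * aseq n := by
  apply rearr_of_norm_antitone (f := fun i => r * aseq i)
  · intro i; exact mul_nonneg hr (aseq_pos i).le
  · intro m n h
    exact mul_le_mul_of_nonneg_left (aseq_anti h) hr
  · intro i
    rw [Pi.smul_apply, norm_smul, alpha_norm, Complex.norm_real, Real.norm_eq_abs, abs_of_nonneg hr]

/-- members of the principal ideal have counting function dominated by `2^(8C/u)` -/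
lemma count_bound {β : ℕ → ℂ} (hβ : β ∈ c0) {C : ℝ} (hC : 1 ≤ C)
    (hS : ∀ n, rearrSum β n ≤ C * rearrSum alphaSeq n) {u : ℝ} (hu : 0 < u) :
    {i : ℕ | u < ‖β i‖}.Finite ∧
      (({i : ℕ | u < ‖β i‖}.ncard : ℝ) + 1) ≤ (2:ℝ) ^ (8 * C / u) := by
  obtain ⟨B, hB0, hB⟩ := c0_bound hβ
  have hnorm : Filter.Tendsto (fun i => ‖β i‖) Filter.atTop (nhds 0) := by simpa using hβ.norm
  have hev : ∀ᶠ i in Filter.cofinite, ‖β i‖ < u := by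
    rw [Nat.cofinite_eq_atTop]
    exact hnorm.eventually_lt_const hu
  have hfin : {i : ℕ | u < ‖β i‖}.Finite := by
    apply Set.Finite.subset (Filter.eventually_cofinite.mp hev)
    intro i hi
    exact not_lt.mpr (le_of_lt hi)
  refine ⟨hfin, ?_⟩
  set N := {i : ℕ | u < ‖β i‖}.ncard with hNdef
  have hexp : 0 ≤ 8 * C / u := by positivity
  rcases Nat.eq_zero_or_pos N with hN | hN
  · rw [hN]
    norm_num
    exact Real.one_le_rpow one_le_two hexp
  · set G := hfin.toFinset with hG
    have hGcard : G.card = N := (Set.ncard_eq_toFinset_card _ hfin).symm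
    have hGmem : ∀ i ∈ G, u ≤ ‖β i‖ := by
      intro i hi
      rw [hG, Set.Finite.mem_toFinset] at hi
      exact le_of_lt hi
    have h1 : (G.card : ℝ) * u ≤ rearrSum β G.card := card_mul_le_rearrSum hB hGmem
    rw [hGcard] at h1
    obtain ⟨M, hM⟩ : ∃ M, N = M + 1 := ⟨N-1, by omega⟩
    have hNr : (N:ℝ) = (M:ℝ) + 1 := by rw [hM]; push_cast; ring
    have h3 : rearrSum alphaSeq N ≤ 8 * ((M:ℝ)+1) * aseq M := by
      rw [hM]; exact rearrSum_alpha_le M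
    have h5 : (N:ℝ) * u ≤ C * (8 * ((M:ℝ)+1) * aseq M) :=
      le_trans h1 (le_trans (hS N) (mul_le_mul_of_nonneg_left h3 (by linarith)))
    have hMpos : (0:ℝ) < (M:ℝ) + 1 := by positivity
    have h6 : ((M:ℝ)+1) * u ≤ ((M:ℝ)+1) * (8 * C * aseq M) := by
      have hring : C * (8*((M:ℝ)+1)*aseq M) = ((M:ℝ)+1) * (8*C*aseq M) := by ring
      rw [hNr] at h5
      linarith
    have h4 : u ≤ 8 * C * aseq M := (mul_le_mul_iff_right₀ hMpos).mp h6
    have hLM := Lpos M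
    have h7 : Real.logb 2 ((M:ℝ)+2) ≤ 8 * C / u := by
      rw [le_div_iff₀ hu]
      have : u * Real.logb 2 ((M:ℝ)+2) ≤ 8 * C * aseq M * Real.logb 2 ((M:ℝ)+2) :=
        mul_le_mul_of_nonneg_right h4 (le_of_lt hLM)
      rw [aseq] at this
      calc Real.logb 2 ((M:ℝ)+2) * u = u * Real.logb 2 ((M:ℝ)+2) := by ring
        _ ≤ 8 * C * (1 / Real.logb 2 ((M:ℝ)+2)) * Real.logb 2 ((M:ℝ)+2) := this
        _ = 8 * C := by field_simp
    have h8 : (N:ℝ) + 1 = (2:ℝ) ^ (Real.logb 2 ((M:ℝ)+2)) := by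
      rw [Real.rpow_logb (by norm_num) (by norm_num) (by positivity), hNr]
      ring
    rw [h8]
    exact Real.rpow_le_rpow_of_exponent_le one_le_two h7

end Aux5
section Aux6

open Finset Real

lemma ncard_prod' {s t : Set ℕ} (hs : s.Finite) (ht : t.Finite) :
    (s ×ˢ t).ncard = s.ncard * t.ncard := by
  rw [Set.ncard_eq_toFinset_card _ (hs.prod ht), Set.ncard_eq_toFinset_card _ hs,
    Set.ncard_eq_toFinset_card _ ht, ← Finset.card_product, Set.Finite.toFinset_prod]

set_option maxHeartbeats 1000000 in
/-- The central estimate: tensor products of two members of the principal ideal satisfy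
the same kind of bound. -/
lemma tensorSeq_bound {β γ : ℕ → ℂ} (hβ0 : β ∈ c0) (hγ0 : γ ∈ c0) {C : ℝ} (hC : 1 ≤ C)
    (hSβ : ∀ n, rearrSum β n ≤ C * rearrSum alphaSeq n)
    (hSγ : ∀ n, rearrSum γ n ≤ C * rearrSum alphaSeq n) (n : ℕ) :
    tensorSeq β γ n ≤ 32 * C^2 * aseq n := by
  obtain ⟨Bβ, hBβ0, hBβ⟩ := c0_bound hβ0
  obtain ⟨Bγ, hBγ0, hBγ⟩ := c0_bound hγ0
  have hCpos : (0:ℝ) < C := lt_of_lt_of_le one_pos hC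
  have hβC : ∀ i, ‖β i‖ ≤ C := by
    intro i
    have h1 : ∑ j ∈ ({i} : Finset ℕ), ‖β j‖ ≤ rearrSum β 1 :=
      le_rearrSum hBβ (Finset.card_singleton i)
    rw [Finset.sum_singleton] at h1
    have h2 := hSβ 1
    rw [rearrSum_alpha_one] at h2
    linarith
  have hγC : ∀ i, ‖γ i‖ ≤ C := by
    intro i
    have h1 : ∑ j ∈ ({i} : Finset ℕ), ‖γ j‖ ≤ rearrSum γ 1 :=
      le_rearrSum hBγ (Finset.card_singleton i)
    rw [Finset.sum_singleton] at h1
    have h2 := hSγ 1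
    rw [rearrSum_alpha_one] at h2
    linarith
  set L := Real.logb 2 ((n:ℝ)+2) with hLdef
  have hL1 : 1 ≤ L := L_ge_one n
  have hLpos : 0 < L := Lpos n
  have haseqn : aseq n = 1/L := by rw [aseq]
  by_cases hL32 : L < 32
  · -- small n : use the trivial bound by the largest entry
    have hemp : {p : ℕ×ℕ | C*C < ‖β p.1‖*‖γ p.2‖} = ∅ := by
      ext p
      simp only [Set.mem_setOf_eq, Set.mem_empty_iff_false, iff_false, not_lt]
      exact mul_le_mul (hβC p.1) (hγC p.2) (norm_nonneg _) (le_of_lt hCpos)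
    have hbound : tensorSeq β γ n ≤ C * C := by
      apply tensorSeq_le_of_count hBβ hBγ (by positivity) (hemp ▸ Set.finite_empty)
      rw [hemp]
      simp
    have h2 : C * C ≤ 32 * C^2 * aseq n := by
      rw [haseqn, show 32*C^2*(1/L) = (32*C^2)/L by ring, le_div_iff₀ hLpos]
      nlinarith
    linarith
  · push_neg at hL32
    set t := 32 * C^2 / L with ht
    have htpos : 0 < t := by positivity
    have hst : (0:ℝ) < Real.sqrt t := Real.sqrt_pos.mpr htpos
    have htC : (0:ℝ) < t / C := by positivity
    obtain ⟨hfinA1, hA1⟩ := count_bound hβ0 hC hSβ hst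
    obtain ⟨hfinB1, hB1c⟩ := count_bound hγ0 hC hSγ htC
    obtain ⟨hfinA2, hA2⟩ := count_bound hβ0 hC hSβ htC
    obtain ⟨hfinB2, hB2c⟩ := count_bound hγ0 hC hSγ hst
    set P := {p : ℕ×ℕ | t < ‖β p.1‖ * ‖γ p.2‖} with hP
    have hsub : P ⊆ ({i | Real.sqrt t < ‖β i‖} ×ˢ {j | t/C < ‖γ j‖})
        ∪ ({i | t/C < ‖β i‖} ×ˢ {j | Real.sqrt t < ‖γ j‖}) := by
      rintro ⟨i, j⟩ hp
      simp only [hP, Set.mem_setOf_eq] at hp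
      rcases le_or_gt ‖β i‖ (Real.sqrt t) with hc | hc
      · have hγj : Real.sqrt t < ‖γ j‖ := by
          by_contra hno
          push_neg at hno
          have hm : ‖β i‖ * ‖γ j‖ ≤ Real.sqrt t * Real.sqrt t :=
            mul_le_mul hc hno (norm_nonneg _) (Real.sqrt_nonneg _)
          rw [Real.mul_self_sqrt htpos.le] at hm
          linarith
        have hβi : t / C < ‖β i‖ := by
          rw [div_lt_iff₀ hCpos]
          calc t < ‖β i‖ * ‖γ j‖ := hp
            _ ≤ ‖β i‖ * C := mul_le_mul_of_nonneg_left (hγC j) (norm_nonneg _)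
        exact Set.mem_union_right _ ⟨hβi, hγj⟩
      · have hγj : t / C < ‖γ j‖ := by
          rw [div_lt_iff₀ hCpos]
          calc t < ‖β i‖ * ‖γ j‖ := hp
            _ = ‖γ j‖ * ‖β i‖ := by ring
            _ ≤ ‖γ j‖ * C := mul_le_mul_of_nonneg_left (hβC i) (norm_nonneg _)
        exact Set.mem_union_left _ ⟨hc, hγj⟩
    have hfinP : P.Finite :=
      Set.Finite.subset ((hfinA1.prod hfinB1).union (hfinA2.prod hfinB2)) hsub
    -- numerical bounds for the exponents
    have hE1 : 8 * C / Real.sqrt t ≤ L / 4 := by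
      rw [div_le_iff₀ hst]
      have hsq : (8*C)^2 ≤ (L/4 * Real.sqrt t)^2 := by
        have h1 : (L/4 * Real.sqrt t)^2 = (L/4)^2 * t := by
          rw [mul_pow, Real.sq_sqrt htpos.le]
        rw [h1, ht]
        have h2 : (L/4)^2 * (32*C^2/L) = 2 * C^2 * L := by
          field_simp
          ring
        rw [h2]
        nlinarith
      have h3 := Real.sqrt_le_sqrt hsq
      rw [Real.sqrt_sq (by positivity), Real.sqrt_sq (by positivity)] at h3
      exact h3
    have hE2 : 8 * C / (t / C) = L / 4 := by
      rw [ht]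
      field_simp
      ring
    -- the cardinality bound
    have hncard : (P.ncard : ℝ) ≤ (n : ℝ) := by
      have h1 : P.ncard ≤ ({i | Real.sqrt t < ‖β i‖} ×ˢ {j | t/C < ‖γ j‖}).ncard
          + ({i | t/C < ‖β i‖} ×ˢ {j | Real.sqrt t < ‖γ j‖}).ncard :=
        le_trans (Set.ncard_le_ncard hsub ((hfinA1.prod hfinB1).union (hfinA2.prod hfinB2)))
          (Set.ncard_union_le _ _)
      rw [ncard_prod' hfinA1 hfinB1, ncard_prod' hfinA2 hfinB2] at h1
      have h2 : (P.ncard : ℝ) ≤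
          ({i | Real.sqrt t < ‖β i‖}.ncard : ℝ) * ({j | t/C < ‖γ j‖}.ncard : ℝ)
          + ({i | t/C < ‖β i‖}.ncard : ℝ) * ({j | Real.sqrt t < ‖γ j‖}.ncard : ℝ) := by
        exact_mod_cast h1
      have hx1 : (0:ℝ) ≤ ({i | Real.sqrt t < ‖β i‖}.ncard : ℝ) := Nat.cast_nonneg _
      have hx2 : (0:ℝ) ≤ ({j | t/C < ‖γ j‖}.ncard : ℝ) := Nat.cast_nonneg _
      have hx3 : (0:ℝ) ≤ ({i | t/C < ‖β i‖}.ncard : ℝ) := Nat.cast_nonneg _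
      have hx4 : (0:ℝ) ≤ ({j | Real.sqrt t < ‖γ j‖}.ncard : ℝ) := Nat.cast_nonneg _
      have hp1 : ({i | Real.sqrt t < ‖β i‖}.ncard : ℝ) * ({j | t/C < ‖γ j‖}.ncard : ℝ)
          ≤ (2:ℝ) ^ (8*C/Real.sqrt t) * (2:ℝ) ^ (8*C/(t/C)) := by
        apply mul_le_mul (by linarith) (by linarith) hx2 (by positivity)
      have hp2 : ({i | t/C < ‖β i‖}.ncard : ℝ) * ({j | Real.sqrt t < ‖γ j‖}.ncard : ℝ)
          ≤ (2:ℝ) ^ (8*C/(t/C)) * (2:ℝ) ^ (8*C/Real.sqrt t) := by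
        apply mul_le_mul (by linarith) (by linarith) hx4 (by positivity)
      have hpow : (2:ℝ) ^ (8*C/Real.sqrt t) * (2:ℝ) ^ (8*C/(t/C)) ≤ (2:ℝ) ^ (L/2) := by
        rw [← Real.rpow_add (by norm_num : (0:ℝ) < 2)]
        apply Real.rpow_le_rpow_of_exponent_le one_le_two
        rw [hE2]
        linarith
      have hsum : (P.ncard : ℝ) ≤ 2 * (2:ℝ) ^ (L/2) := by
        have := mul_comm ((2:ℝ) ^ (8*C/(t/C))) ((2:ℝ) ^ (8*C/Real.sqrt t))
        nlinarith [hpow]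
      have h2L : ((n:ℝ) + 2) = (2:ℝ) ^ L := by
        rw [hLdef, Real.rpow_logb (by norm_num) (by norm_num) (by positivity)]
      have hfinal : 2 * (2:ℝ) ^ (L/2) ≤ (n:ℝ) := by
        have e1 : 2 * (2:ℝ) ^ (L/2) = (2:ℝ) ^ (L/2 + 1) := by
          rw [Real.rpow_add (by norm_num : (0:ℝ) < 2), Real.rpow_one]
          ring
        have e2 : (2:ℝ) ^ (L/2 + 1) ≤ (2:ℝ) ^ (L - 1) :=
          Real.rpow_le_rpow_of_exponent_le one_le_two (by linarith)
        have e3 : (2:ℝ) ^ (L - 1) = ((n:ℝ) + 2) / 2 := by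
          rw [Real.rpow_sub (by norm_num : (0:ℝ) < 2), Real.rpow_one, h2L]
        have hn2 : (4:ℝ) ≤ (n:ℝ) + 2 := by
          rw [h2L]
          calc (4:ℝ) = (2:ℝ) ^ ((2:ℕ):ℝ) := by
                rw [Real.rpow_natCast]; norm_num
            _ ≤ (2:ℝ) ^ L := Real.rpow_le_rpow_of_exponent_le one_le_two (by push_cast; linarith)
        rw [e1]
        calc (2:ℝ) ^ (L/2 + 1) ≤ (2:ℝ) ^ (L - 1) := e2
          _ = ((n:ℝ) + 2) / 2 := e3
          _ ≤ (n:ℝ) := by linarith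
      linarith
    have hcardn : P.ncard ≤ n := by exact_mod_cast hncard
    have hmain := tensorSeq_le_of_count hBβ hBγ htpos.le hfinP hcardn
    calc tensorSeq β γ n ≤ t := hmain
      _ = 32 * C^2 * aseq n := by rw [ht, haseqn]; ring

end Aux6
section Final

open Finset Real Filter

/-- the candidate description of the principal Calkin space -/
def Sset : Set (ℕ → ℂ) :=
  {β | β ∈ c0 ∧ ∃ C : ℝ, 1 ≤ C ∧ ∀ n, rearrSum β n ≤ C * rearrSum alphaSeq n}

lemma c0_zero : (0 : ℕ → ℂ) ∈ c0 := tendsto_const_nhds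

lemma c0_add {β γ : ℕ → ℂ} (hβ : β ∈ c0) (hγ : γ ∈ c0) : β + γ ∈ c0 := by
  have := hβ.add hγ
  simp only [add_zero] at this; exact this

lemma c0_smul (c : ℂ) {β : ℕ → ℂ} (hβ : β ∈ c0) : c • β ∈ c0 := by
  have := hβ.const_smul c
  simp only [smul_zero] at this; exact this

lemma S_calkin : IsCalkinSpace Sset := by
  refine ⟨fun β hβ => hβ.1, ?_, ?_, ?_, ?_⟩
  · refine ⟨c0_zero, 1, le_refl 1, fun n => ?_⟩
    have h0 : rearrSum (0 : ℕ → ℂ) n = 0 := by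
      apply le_antisymm (rearrSum_le le_rfl (fun F _ => by simp))
      exact rearrSum_nonneg (B := 0) (fun i => by simp) n
    rw [h0, one_mul]
    exact rearrSum_alpha_nonneg n
  · rintro β ⟨hβ0, Cβ, hCβ, hSβ⟩ γ ⟨hγ0, Cγ, hCγ, hSγ⟩
    obtain ⟨Bβ, hBβ0, hBβ⟩ := c0_bound hβ0
    obtain ⟨Bγ, hBγ0, hBγ⟩ := c0_bound hγ0
    refine ⟨c0_add hβ0 hγ0, Cβ + Cγ, by linarith, fun n => ?_⟩
    have h1 : rearrSum (β + γ) n ≤ rearrSum β n + rearrSum γ n := by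
      apply rearrSum_le (by linarith [rearrSum_nonneg hBβ n, rearrSum_nonneg hBγ n])
      intro F hF
      calc ∑ i ∈ F, ‖(β + γ) i‖ ≤ ∑ i ∈ F, (‖β i‖ + ‖γ i‖) :=
            Finset.sum_le_sum (fun i _ => norm_add_le _ _)
        _ = ∑ i ∈ F, ‖β i‖ + ∑ i ∈ F, ‖γ i‖ := Finset.sum_add_distrib
        _ ≤ rearrSum β n + rearrSum γ n := add_le_add (le_rearrSum hBβ hF) (le_rearrSum hBγ hF)
    calc rearrSum (β + γ) n ≤ rearrSum β n + rearrSum γ n := h1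
      _ ≤ Cβ * rearrSum alphaSeq n + Cγ * rearrSum alphaSeq n := add_le_add (hSβ n) (hSγ n)
      _ = (Cβ + Cγ) * rearrSum alphaSeq n := by ring
  · rintro c β ⟨hβ0, Cβ, hCβ, hSβ⟩
    obtain ⟨Bβ, hBβ0, hBβ⟩ := c0_bound hβ0
    refine ⟨c0_smul c hβ0, max (‖c‖ * Cβ) 1, le_max_right _ _, fun n => ?_⟩
    have h1 : rearrSum (c • β) n ≤ ‖c‖ * rearrSum β n := by
      apply rearrSum_le (mul_nonneg (norm_nonneg c) (rearrSum_nonneg hBβ n))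
      intro F hF
      calc ∑ i ∈ F, ‖(c • β) i‖ = ‖c‖ * ∑ i ∈ F, ‖β i‖ := by
            rw [Finset.mul_sum]
            exact Finset.sum_congr rfl (fun i _ => by simp [norm_smul])
        _ ≤ ‖c‖ * rearrSum β n := mul_le_mul_of_nonneg_left (le_rearrSum hBβ hF) (norm_nonneg c)
    calc rearrSum (c • β) n ≤ ‖c‖ * (Cβ * rearrSum alphaSeq n) :=
          le_trans h1 (mul_le_mul_of_nonneg_left (hSβ n) (norm_nonneg c))
      _ = (‖c‖ * Cβ) * rearrSum alphaSeq n := by ring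
      _ ≤ max (‖c‖ * Cβ) 1 * rearrSum alphaSeq n :=
          mul_le_mul_of_nonneg_right (le_max_left _ _) (rearrSum_alpha_nonneg n)
  · rintro β ⟨hβ0, Cβ, hCβ, hSβ⟩ γ hγ0 hdom
    refine ⟨hγ0, Cβ, hCβ, fun n => ?_⟩
    calc rearrSum γ n = ∑ i ∈ Finset.range n, rearr γ i := rearrSum_eq_sum_rearr γ n
      _ ≤ ∑ i ∈ Finset.range n, rearr β i := Finset.sum_le_sum (fun i _ => hdom i)
      _ = rearrSum β n := (rearrSum_eq_sum_rearr β n).symm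
      _ ≤ Cβ * rearrSum alphaSeq n := hSβ n

lemma alpha_mem_S : alphaSeq ∈ Sset :=
  ⟨alpha_c0, 1, le_rfl, fun n => by rw [one_mul]⟩

lemma S_subset_calkin {K : Set (ℕ → ℂ)} (hK : IsCalkinSpace K) (hα : alphaSeq ∈ K) :
    Sset ⊆ K := by
  rintro β ⟨hβ0, C, hC, hSβ⟩
  obtain ⟨hKc0, hK0, hKadd, hKsmul, hKdom⟩ := hK
  have hsm : (((8 * C : ℝ)) : ℂ) • alphaSeq ∈ K := hKsmul _ _ hα
  apply hKdom _ hsm β hβ0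
  intro n
  rw [rearr_smul_alpha (by linarith : (0:ℝ) ≤ 8 * C) n]
  obtain ⟨B, hB0, hB⟩ := c0_bound hβ0
  have h1 : ((n:ℝ) + 1) * rearr β n ≤ rearrSum β (n+1) := mul_rearr_le hB n
  have h2 : rearrSum β (n+1) ≤ C * (8 * ((n:ℝ)+1) * aseq n) :=
    le_trans (hSβ (n+1)) (mul_le_mul_of_nonneg_left (rearrSum_alpha_le n) (by linarith))
  have hnp : (0:ℝ) < (n:ℝ) + 1 := by positivity
  have h3 : ((n:ℝ)+1) * rearr β n ≤ ((n:ℝ)+1) * (8 * C * aseq n) := by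
    have hring : C * (8 * ((n:ℝ)+1) * aseq n) = ((n:ℝ)+1) * (8 * C * aseq n) := by ring
    linarith
  exact (mul_le_mul_iff_right₀ hnp).mp h3

lemma alpha_norm_le_one : ∀ i, ‖alphaSeq i‖ ≤ 1 := fun i => by
  rw [alpha_norm]; exact aseq_le_one i

lemma tensor_alpha_ub (n : ℕ) : tensorSeq alphaSeq alphaSeq n ≤ 1 := by
  have hemp : {p : ℕ×ℕ | (1:ℝ) < ‖alphaSeq p.1‖ * ‖alphaSeq p.2‖} = ∅ := by
    ext p
    simp only [Set.mem_setOf_eq, Set.mem_empty_iff_false, iff_false, not_lt]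
    calc ‖alphaSeq p.1‖ * ‖alphaSeq p.2‖ ≤ 1 * 1 :=
          mul_le_mul (alpha_norm_le_one p.1) (alpha_norm_le_one p.2) (norm_nonneg _) zero_le_one
      _ = 1 := by norm_num
  apply tensorSeq_le_of_count alpha_norm_le_one alpha_norm_le_one zero_le_one
    (hemp ▸ Set.finite_empty)
  rw [hemp]
  simp

lemma tensor_alpha_lb (n : ℕ) : aseq n ≤ tensorSeq alphaSeq alphaSeq n := by
  apply le_tensorSeq_of_lb alpha_norm_le_one alpha_norm_le_one
  intro i hi
  rw [alpha_norm, alpha_norm, aseq_zero, mul_one]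
  exact aseq_anti hi

lemma tensor_alpha_nonneg (n : ℕ) : 0 ≤ tensorSeq alphaSeq alphaSeq n :=
  le_trans (aseq_pos n).le (tensor_alpha_lb n)

lemma S_tensor : ∀ β ∈ Sset, ∀ γ ∈ Sset, toC (tensorSeq β γ) ∈ Sset := by
  rintro β ⟨hβ0, Cβ, hCβ, hSβ⟩ γ ⟨hγ0, Cγ, hCγ, hSγ⟩
  set C := max Cβ Cγ with hC
  have hC1 : 1 ≤ C := le_trans hCβ (le_max_left _ _)
  have hSβ' : ∀ n, rearrSum β n ≤ C * rearrSum alphaSeq n := fun n =>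
    le_trans (hSβ n) (mul_le_mul_of_nonneg_right (le_max_left _ _) (rearrSum_alpha_nonneg n))
  have hSγ' : ∀ n, rearrSum γ n ≤ C * rearrSum alphaSeq n := fun n =>
    le_trans (hSγ n) (mul_le_mul_of_nonneg_right (le_max_right _ _) (rearrSum_alpha_nonneg n))
  have hbd : ∀ n, tensorSeq β γ n ≤ 32 * C^2 * aseq n :=
    tensorSeq_bound hβ0 hγ0 hC1 hSβ' hSγ'
  obtain ⟨Bβ, hBβ0, hBβ⟩ := c0_bound hβ0
  obtain ⟨Bγ, hBγ0, hBγ⟩ := c0_bound hγ0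
  have hnn : ∀ n, 0 ≤ tensorSeq β γ n := tensorSeq_nonneg hBβ hBγ
  have hnorm : ∀ i, ‖toC (tensorSeq β γ) i‖ = tensorSeq β γ i := fun i => by
    simp only [toC, Complex.norm_real]
    exact abs_of_nonneg (hnn i)
  have h32 : (0:ℝ) ≤ 32 * C^2 := by positivity
  constructor
  · have hupper : Filter.Tendsto (fun n => 32 * C^2 * aseq n) Filter.atTop (nhds 0) := by
      have := aseq_tendsto.const_mul (32 * C^2)
      simpa using this
    have hreal : Filter.Tendsto (tensorSeq β γ) Filter.atTop (nhds 0) :=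
      squeeze_zero hnn hbd hupper
    have h := (Complex.continuous_ofReal.tendsto 0).comp hreal
    exact h
  · refine ⟨max (32 * C^2) 1, le_max_right _ _, fun n => ?_⟩
    rw [rearrSum_alpha]
    have hsumnn : (0:ℝ) ≤ ∑ i ∈ Finset.range n, aseq i :=
      Finset.sum_nonneg (fun i _ => (aseq_pos i).le)
    apply rearrSum_le (mul_nonneg (le_trans zero_le_one (le_max_right _ _)) hsumnn)
    intro F hF
    calc ∑ i ∈ F, ‖toC (tensorSeq β γ) i‖ = ∑ i ∈ F, tensorSeq β γ i :=
          Finset.sum_congr rfl (fun i _ => hnorm i)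
      _ ≤ ∑ i ∈ F, 32 * C^2 * aseq i := Finset.sum_le_sum (fun i _ => hbd i)
      _ = 32 * C^2 * ∑ i ∈ F, aseq i := by rw [Finset.mul_sum]
      _ ≤ 32 * C^2 * ∑ i ∈ Finset.range n, aseq i := by
          apply mul_le_mul_of_nonneg_left _ h32
          have := sum_antitone_le (fun i => (aseq_pos i).le) (fun m k h => aseq_anti h) F
          rw [hF] at this
          exact this
      _ ≤ max (32 * C^2) 1 * ∑ i ∈ Finset.range n, aseq i :=
          mul_le_mul_of_nonneg_right (le_max_left _ _) hsumnn

end Final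

/-- The principal Calkin space generated by the sequence
`(1/log₂(n+1))_{n=1}^∞` is stable. -/
theorem principal_log_stable :
    IsStableCalkin (principalCalkin (toC fun n => 1 / Real.logb 2 ((n : ℝ) + 2))) := by
  have hid : (toC fun n => 1 / Real.logb 2 ((n : ℝ) + 2)) = alphaSeq := rfl
  rw [hid]
  have hPS : principalCalkin alphaSeq = Sset := by
    apply subset_antisymm
    · exact Set.sInter_subset_of_mem ⟨S_calkin, alpha_mem_S⟩
    · intro β hβ
      apply Set.mem_sInter.mpr
      rintro K ⟨hKc, hKα⟩
      exact S_subset_calkin hKc hKα hβ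
  constructor
  · rw [hPS]; exact S_calkin
  · rw [hPS]
    apply subset_antisymm
    · exact Set.sInter_subset_of_mem ⟨S_calkin, S_tensor⟩
    · intro β hβ
      apply Set.mem_sInter.mpr
      rintro K ⟨hKc, hKt⟩
      have hδK : toC (tensorSeq alphaSeq alphaSeq) ∈ K := hKt _ alpha_mem_S _ alpha_mem_S
      have hδnorm : ∀ i, ‖toC (tensorSeq alphaSeq alphaSeq) i‖ = tensorSeq alphaSeq alphaSeq i :=
        fun i => by
          simp only [toC, Complex.norm_real]
          exact abs_of_nonneg (tensor_alpha_nonneg i)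
      have hδB : ∀ i, ‖toC (tensorSeq alphaSeq alphaSeq) i‖ ≤ 1 := fun i => by
        rw [hδnorm i]; exact tensor_alpha_ub i
      have hαK : alphaSeq ∈ K := by
        obtain ⟨hKc0, hK0, hKadd, hKsm, hKdom⟩ := hKc
        apply hKdom _ hδK _ alpha_c0
        intro n
        rw [rearr_alpha]
        apply le_rearr_of_lb hδB (aseq_pos n).le
        intro i hi
        rw [hδnorm i]
        exact le_trans (aseq_anti hi) (tensor_alpha_lb i)
      exact S_subset_calkin hKc hαK hβ
end
end

section
/- Let w = (wₙ)_{n≥1} be a weight sequence for which there exists a constant C > 0 with w_{mn} ≤ C wₘ wₙ for all m, n ∈ ℕ, and let 1 ≤ p < ∞. Then for all α, β ∈ ℓ_{w,p} one has ‖α⊗β‖_{w,p} ≤ C^{1/p} ‖α‖_{w,p} ‖β‖_{w,p}; in particular, ℓ_{w,p} is a stable Calkin space. -/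
set_option linter.unusedSectionVars false
set_option linter.unusedVariables false

open scoped BigOperators

noncomputable section


/-- The Lorentz sequence space `ℓ_{w,p}`. -/
def lorentzSpace (w : ℕ → ℝ) (p : ℝ) : Set (ℕ → ℂ) :=
  {α | α ∈ c0 ∧ Summable (fun n => w n * (rearr α n) ^ p)}

/-- The Lorentz norm `‖α‖_{w,p} = (Σₙ wₙ (α*ₙ)^p)^{1/p}`. -/
def lorentzNorm (w : ℕ → ℝ) (p : ℝ) (α : ℕ → ℂ) : ℝ :=
  (∑' n, w n * (rearr α n) ^ p) ^ (1 / p)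


namespace CalkinAux

variable {ι : Type} [DecidableEq ι] [Infinite ι] [PartialOrder ι] [WellFoundedLT ι]

/-- generic partial-sup sequence -/
def gS (v : ι → ℝ) (n : ℕ) : ℝ :=
  sSup ((fun F : Finset ι => ∑ i ∈ F, v i) '' {F | F.card = n})

def gd (v : ι → ℝ) (n : ℕ) : ℝ := gS v (n + 1) - gS v n

/-- the property of being a nonnegative null family -/
structure Null (v : ι → ℝ) : Prop where
  nonneg : ∀ i, 0 ≤ v i
  finite : ∀ ε : ℝ, 0 < ε → {i | ε < v i}.Finite

variable {v : ι → ℝ}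

lemma Null.bound (hv : Null v) : ∃ M : ℝ, 0 ≤ M ∧ ∀ i, v i ≤ M := by
  classical
  set T := (hv.finite 1 one_pos).toFinset with hT
  have hs : (0:ℝ) ≤ ∑ i ∈ T, v i := Finset.sum_nonneg fun j _ => hv.nonneg j
  refine ⟨(∑ i ∈ T, v i) + 1, by linarith, fun i => ?_⟩
  by_cases hi : (1:ℝ) < v i
  · have hiT : i ∈ T := by simp [hT, hi]
    have := Finset.single_le_sum (fun j (_ : j ∈ T) => hv.nonneg j) hiT
    linarith
  · push_neg at hi; linarith

lemma gS_nonempty (n : ℕ) :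
    ((fun F : Finset ι => ∑ i ∈ F, v i) '' {F | F.card = n}).Nonempty := by
  classical
  refine ⟨∑ i ∈ (Finset.range n).map (Infinite.natEmbedding ι), v i, ?_⟩
  exact ⟨_, by simp, rfl⟩

lemma Null.bddAbove (hv : Null v) (n : ℕ) :
    BddAbove ((fun F : Finset ι => ∑ i ∈ F, v i) '' {F | F.card = n}) := by
  obtain ⟨M, hM0, hM⟩ := hv.bound
  refine ⟨n * M, ?_⟩
  rintro x ⟨F, hF, rfl⟩
  calc ∑ i ∈ F, v i ≤ ∑ _i ∈ F, M := Finset.sum_le_sum fun i _ => hM i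
    _ = F.card * M := by simp [mul_comm]
    _ = n * M := by rw [hF]

lemma Null.le_gS (hv : Null v) {F : Finset ι} {n : ℕ} (hF : F.card = n) :
    ∑ i ∈ F, v i ≤ gS v n :=
  le_csSup (hv.bddAbove n) ⟨F, hF, rfl⟩

lemma Null.gS_le (hv : Null v) {n : ℕ} {c : ℝ}
    (h : ∀ F : Finset ι, F.card = n → ∑ i ∈ F, v i ≤ c) : gS v n ≤ c := by
  refine csSup_le (gS_nonempty n) ?_
  rintro x ⟨F, hF, rfl⟩; exact h F hF

lemma gS_zero : gS v 0 = 0 := by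
  have : ((fun F : Finset ι => ∑ i ∈ F, v i) '' {F | F.card = 0}) = {0} := by
    ext x
    constructor
    · rintro ⟨F, hF, rfl⟩
      simp only [Set.mem_setOf_eq, Finset.card_eq_zero] at hF
      simp [hF]
    · rintro rfl; exact ⟨∅, by simp⟩
  rw [gS, this, csSup_singleton]

/-- existence of a maximal, order-minimal pick outside a finite set -/
lemma Null.exists_pick (hv : Null v) (A : Finset ι) :
    ∃ x, x ∉ A ∧ (∀ y, y ∉ A → v y ≤ v x) ∧ (∀ y, y ∉ A → y < x → v y < v x) := by
  classical
  -- first get a maximizer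
  have hmax : ∃ x, x ∉ A ∧ ∀ y, y ∉ A → v y ≤ v x := by
    by_cases h : ∃ y, y ∉ A ∧ 0 < v y
    · obtain ⟨y0, hy0A, hy0⟩ := h
      set S := ((hv.finite (v y0 / 2) (by linarith)).toFinset.filter (fun i => i ∉ A)) with hS
      have hy0S : y0 ∈ S := by
        simp only [hS, Finset.mem_filter, Set.Finite.mem_toFinset, Set.mem_setOf_eq]
        exact ⟨by linarith, hy0A⟩
      obtain ⟨x, hxS, hx⟩ := S.exists_max_image v ⟨y0, hy0S⟩
      have hxA : x ∉ A := by
        simp only [hS, Finset.mem_filter] at hxS; exact hxS.2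
      refine ⟨x, hxA, fun y hyA => ?_⟩
      by_cases hyS : y ∈ S
      · exact hx y hyS
      · -- y ∉ S means v y ≤ v y0 / 2
        have : ¬ (v y0 / 2 < v y) := by
          intro hgt
          exact hyS (by simp [hS, Set.Finite.mem_toFinset, hyA, hgt])
        push_neg at this
        have : v y ≤ v y0 / 2 := this
        have h2 : v y0 ≤ v x := hx y0 hy0S
        linarith
    · push_neg at h
      obtain ⟨x, hx⟩ := A.exists_notMem
      refine ⟨x, hx, fun y hy => ?_⟩
      have h1 : v y ≤ 0 := h y hy
      have h2 := hv.nonneg x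
      linarith
  obtain ⟨x0, hx0A, hx0⟩ := hmax
  -- now take a <-minimal element of the argmax set
  set S : Set ι := {x | x ∉ A ∧ v x = v x0} with hS
  have hSne : S.Nonempty := ⟨x0, hx0A, rfl⟩
  obtain ⟨x, hxS, hxmin⟩ := (IsWellFounded.wf (r := ((· < ·) : ι → ι → Prop))).has_min S hSne
  refine ⟨x, hxS.1, fun y hy => by rw [hxS.2]; exact hx0 y hy, fun y hyA hylt => ?_⟩
  have hle : v y ≤ v x := by rw [hxS.2]; exact hx0 y hyA
  rcases lt_or_eq_of_le hle with h | h
  · exact h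
  · exact absurd hylt (by
      have : y ∈ S := ⟨hyA, by rw [h, hxS.2]⟩
      exact fun hlt => hxmin y this hlt)

variable (hv : Null v)
include hv

def gE (hv : Null v) : ℕ → Finset ι
  | 0 => ∅
  | n+1 => gE hv n ∪ {(hv.exists_pick (gE hv n)).choose}

def ge (hv : Null v) (n : ℕ) : ι := (hv.exists_pick (gE hv n)).choose

lemma gE_succ (n : ℕ) : gE hv (n+1) = gE hv n ∪ {ge hv n} := rfl

lemma ge_spec (n : ℕ) : ge hv n ∉ gE hv n ∧ (∀ y, y ∉ gE hv n → v y ≤ v (ge hv n)) ∧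
    (∀ y, y ∉ gE hv n → y < ge hv n → v y < v (ge hv n)) :=
  (hv.exists_pick (gE hv n)).choose_spec

lemma ge_not_mem (n : ℕ) : ge hv n ∉ gE hv n := (ge_spec hv n).1

lemma ge_max {y : ι} {n : ℕ} (hy : y ∉ gE hv n) : v y ≤ v (ge hv n) := (ge_spec hv n).2.1 y hy

lemma ge_min {y : ι} {n : ℕ} (hy : y ∉ gE hv n) (hlt : y < ge hv n) :
    v y < v (ge hv n) := (ge_spec hv n).2.2 y hy hlt

lemma gE_card (n : ℕ) : (gE hv n).card = n := by
  induction n with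
  | zero => rfl
  | succ n ih =>
    rw [gE_succ, Finset.union_comm, ← Finset.insert_eq,
      Finset.card_insert_of_notMem (ge_not_mem hv n), ih]

lemma gE_mono {m n : ℕ} (h : m ≤ n) : gE hv m ⊆ gE hv n := by
  induction n with
  | zero => simp_all
  | succ n ih =>
    rcases Nat.lt_or_ge m (n+1) with h' | h'
    · exact (ih (Nat.lt_succ_iff.mp h')).trans (by rw [gE_succ]; exact Finset.subset_union_left)
    · have : m = n + 1 := le_antisymm h h'
      subst this; rfl

lemma ge_mem {k n : ℕ} (h : k < n) : ge hv k ∈ gE hv n := by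
  have : ge hv k ∈ gE hv (k+1) := by rw [gE_succ]; simp
  exact gE_mono hv h this

lemma ge_inj : Function.Injective (ge hv) := by
  intro m n h
  by_contra hne
  wlog hlt : m < n generalizing m n
  · exact this h.symm (Ne.symm hne) (by omega)
  · exact ge_not_mem hv n (h ▸ ge_mem hv hlt)

lemma gE_eq_image (n : ℕ) : gE hv n = (Finset.range n).image (ge hv) := by
  induction n with
  | zero => rfl
  | succ n ih => rw [gE_succ, ih, Finset.range_add_one, Finset.image_insert, Finset.union_comm,
      Finset.insert_eq]

lemma v_ge_antitone : Antitone (fun n => v (ge hv n)) := by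
  refine antitone_nat_of_succ_le fun n => ?_
  exact ge_max hv (fun hmem => ge_not_mem hv (n+1) (gE_mono hv (Nat.le_succ n) hmem))

lemma gS_eq (n : ℕ) : gS v n = ∑ k ∈ Finset.range n, v (ge hv k) := by
  refine le_antisymm ?_ ?_
  · refine hv.gS_le fun F hF => ?_
    induction n generalizing F with
    | zero => simp_all [Finset.card_eq_zero.mp hF]
    | succ n ih =>
      have hcard : (gE hv n).card < F.card := by rw [gE_card hv, hF]; omega
      obtain ⟨x, hxF, hxE⟩ : ∃ x ∈ F, x ∉ gE hv n := by
        by_contra h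
        push_neg at h
        exact absurd (Finset.card_le_card h) (by omega)
      have h1 : ∑ i ∈ F.erase x, v i ≤ ∑ k ∈ Finset.range n, v (ge hv k) :=
        ih _ (by rw [Finset.card_erase_of_mem hxF, hF]; rfl)
      have h2 : v x ≤ v (ge hv n) := ge_max hv hxE
      rw [← Finset.add_sum_erase _ _ hxF, Finset.sum_range_succ]
      linarith
  · have := hv.le_gS (F := gE hv n) (gE_card hv n)
    rwa [gE_eq_image, Finset.sum_image (by intro a _ b _ h; exact ge_inj hv h),
      ] at this

lemma gd_eq (n : ℕ) : gd v n = v (ge hv n) := by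
  rw [gd, gS_eq hv, gS_eq hv, Finset.sum_range_succ]; ring

lemma gd_nonneg (n : ℕ) : 0 ≤ gd v n := by rw [gd_eq hv]; exact hv.nonneg _

lemma gd_antitone : Antitone (gd v) := by
  intro m n h
  rw [gd_eq hv, gd_eq hv]
  exact v_ge_antitone hv h

lemma gd_tendsto_zero : Filter.Tendsto (gd v) Filter.atTop (nhds 0) := by
  rw [Metric.tendsto_atTop]
  intro ε hε
  refine ⟨(hv.finite (ε/2) (by linarith)).toFinset.card + 1, fun n hn => ?_⟩
  rw [Real.dist_eq, sub_zero, abs_of_nonneg (gd_nonneg hv n)]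
  by_contra h
  push_neg at h
  have hsub : gE hv n ⊆ (hv.finite (ε/2) (by linarith)).toFinset := by
    rw [gE_eq_image]
    intro x hx
    simp only [Finset.mem_image, Finset.mem_range] at hx
    obtain ⟨k, hk, rfl⟩ := hx
    have : gd v n ≤ v (ge hv k) := by
      rw [gd_eq hv]; exact v_ge_antitone hv (le_of_lt hk)
    simp only [Set.Finite.mem_toFinset, Set.mem_setOf_eq]
    linarith
  have := Finset.card_le_card hsub
  rw [gE_card hv] at this
  omega

/-- pigeonhole: some element of a (k+1)-element set has value at most `gd v k` -/
lemma gd_pigeonhole {F : Finset ι} {k : ℕ} (hF : k + 1 ≤ F.card) :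
    ∃ x ∈ F, v x ≤ gd v k := by
  obtain ⟨x, hxF, hxE⟩ : ∃ x ∈ F, x ∉ gE hv k := by
    by_contra h
    push_neg at h
    have := Finset.card_le_card h
    rw [gE_card hv] at this
    omega
  exact ⟨x, hxF, by rw [gd_eq hv]; exact ge_max hv hxE⟩

/-- if all indices with value `> t` lie in `S` then `gd v k ≤ t` for `k ≥ S.card` -/
lemma gd_le_of_count {t : ℝ} {S : Finset ι} (hS : ∀ i, t < v i → i ∈ S) {k : ℕ}
    (hk : S.card ≤ k) : gd v k ≤ t := by
  by_contra h
  push_neg at h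
  have hsub : gE hv (k+1) ⊆ S := by
    rw [gE_eq_image]
    intro x hx
    simp only [Finset.mem_image, Finset.mem_range] at hx
    obtain ⟨m, hm, rfl⟩ := hx
    refine hS _ ?_
    calc t < gd v k := h
      _ = v (ge hv k) := gd_eq hv k
      _ ≤ v (ge hv m) := v_ge_antitone hv (Nat.lt_succ_iff.mp hm)
  have := Finset.card_le_card hsub
  rw [gE_card hv] at this
  omega

/-- converse counting: at most `k` indices have value `> gd v k` -/
lemma count_le_of_gd {k : ℕ} {S : Finset ι} (hS : ∀ i ∈ S, gd v k < v i) : S.card ≤ k := by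
  by_contra h
  push_neg at h
  obtain ⟨x, hxS, hx⟩ := gd_pigeonhole hv (F := S) (k := k) h
  exact absurd hx (not_le.mpr (hS x hxS))

/-- ranking injection: members of `F` are dominated by distinct terms of `gd v` -/
lemma exists_ranking (F : Finset ι) :
    ∃ r : ι → ℕ, Set.InjOn r F ∧ ∀ i ∈ F, r i < F.card ∧ v i ≤ gd v (r i) := by
  classical
  induction F using Finset.strongInduction with
  | _ F ih =>
    rcases Finset.eq_empty_or_nonempty F with rfl | hne
    · exact ⟨fun _ => 0, by simp, by simp⟩
    · obtain ⟨x, hxF, hx⟩ := F.exists_min_image v hne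
      obtain ⟨r', hr'inj, hr'⟩ := ih (F.erase x) (Finset.erase_ssubset hxF)
      refine ⟨Function.update r' x (F.card - 1), ?_, ?_⟩
      · intro a ha b hb hab
        by_cases hax : a = x <;> by_cases hbx : b = x
        · rw [hax, hbx]
        · exfalso
          have hbe : b ∈ F.erase x := Finset.mem_erase.mpr ⟨hbx, hb⟩
          have := (hr' b hbe).1
          rw [Function.update_apply, Function.update_apply, if_pos hax, if_neg hbx] at hab
          rw [Finset.card_erase_of_mem hxF] at this
          have hpos : 0 < F.card := Finset.card_pos.mpr hne
          omega
        · exfalso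
          have hae : a ∈ F.erase x := Finset.mem_erase.mpr ⟨hax, ha⟩
          have := (hr' a hae).1
          rw [Function.update_apply, Function.update_apply, if_neg hax, if_pos hbx] at hab
          rw [Finset.card_erase_of_mem hxF] at this
          have hpos : 0 < F.card := Finset.card_pos.mpr hne
          omega
        · have hae : a ∈ F.erase x := Finset.mem_erase.mpr ⟨hax, ha⟩
          have hbe : b ∈ F.erase x := Finset.mem_erase.mpr ⟨hbx, hb⟩
          rw [Function.update_apply, Function.update_apply, if_neg hax, if_neg hbx] at hab
          exact hr'inj hae hbe hab
      · intro i hi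
        by_cases hix : i = x
        · subst hix
          rw [Function.update_self]
          have hpos : 0 < F.card := Finset.card_pos.mpr hne
          refine ⟨by omega, ?_⟩
          obtain ⟨y, hyF, hy⟩ := gd_pigeonhole hv (F := F) (k := F.card - 1) (by omega)
          exact le_trans (hx y hyF) hy
        · have hie : i ∈ F.erase x := Finset.mem_erase.mpr ⟨hix, hi⟩
          rw [Function.update_apply, if_neg hix]
          refine ⟨?_, (hr' i hie).2⟩
          have := (hr' i hie).1
          rw [Finset.card_erase_of_mem hxF] at this
          have hpos : 0 < F.card := Finset.card_pos.mpr hne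
          omega

end CalkinAux

namespace CalkinAux

lemma null_norm {α : ℕ → ℂ} (h : α ∈ c0) : Null (fun i => ‖α i‖) := by
  constructor
  · intro i; positivity
  · intro ε hε
    have := Metric.tendsto_atTop.mp h ε hε
    obtain ⟨N, hN⟩ := this
    refine Set.Finite.subset (Set.finite_Iio N) ?_
    intro i hi
    simp only [Set.mem_setOf_eq] at hi
    by_contra hiN
    simp only [Set.mem_Iio, not_lt] at hiN
    have := hN i hiN
    rw [dist_eq_norm, sub_zero] at this
    linarith

/-- a nonneg antitone real sequence tending to zero is null -/
lemma null_real {f : ℕ → ℝ} (h0 : ∀ n, 0 ≤ f n) (ha : Antitone f)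
    (hl : Filter.Tendsto f Filter.atTop (nhds 0)) : Null f := by
  constructor
  · exact h0
  · intro ε hε
    obtain ⟨N, hN⟩ := Metric.tendsto_atTop.mp hl ε hε
    refine Set.Finite.subset (Set.finite_Iio N) ?_
    intro i hi
    simp only [Set.mem_setOf_eq] at hi
    by_contra hiN
    simp only [Set.mem_Iio, not_lt] at hiN
    have := hN i hiN
    rw [Real.dist_eq, sub_zero, abs_of_nonneg (h0 i)] at this
    linarith

lemma null_prod {a b : ℕ → ℝ} (ha : Null a) (hb : Null b) :
    Null (fun p : ℕ × ℕ => a p.1 * b p.2) := by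
  obtain ⟨Ma, hMa0, hMa⟩ := ha.bound
  obtain ⟨Mb, hMb0, hMb⟩ := hb.bound
  constructor
  · intro p; exact mul_nonneg (ha.nonneg _) (hb.nonneg _)
  · intro ε hε
    have h1 : {p : ℕ × ℕ | ε < a p.1 * b p.2} ⊆
        {i | ε / (Mb + 1) < a i} ×ˢ {j | ε / (Ma + 1) < b j} := by
      rintro ⟨i, j⟩ h
      simp only [Set.mem_setOf_eq] at h
      constructor
      · simp only [Set.mem_setOf_eq]
        rw [div_lt_iff₀ (by linarith)]
        calc ε < a i * b j := h
          _ ≤ a i * (Mb + 1) := by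
            have := hb.nonneg j
            have := ha.nonneg i
            nlinarith [hMb j]
      · simp only [Set.mem_setOf_eq]
        rw [div_lt_iff₀ (by linarith)]
        calc ε < a i * b j := h
          _ ≤ b j * (Ma + 1) := by
            have := hb.nonneg j
            have := ha.nonneg i
            nlinarith [hMa i]
    exact Set.Finite.subset (Set.Finite.prod
      (ha.finite _ (by positivity)) (hb.finite _ (by positivity))) h1

lemma null_tensor {α β : ℕ → ℂ} (hα : α ∈ c0) (hβ : β ∈ c0) :
    Null (fun p : ℕ × ℕ => ‖α p.1‖ * ‖β p.2‖) :=
  null_prod (null_norm hα) (null_norm hβ)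

lemma rearrSum_eq_gS (α : ℕ → ℂ) : rearrSum α = gS (fun i => ‖α i‖) := rfl

lemma rearr_eq_gd (α : ℕ → ℂ) : rearr α = gd (fun i => ‖α i‖) := rfl

lemma tensorSum_eq_gS (α β : ℕ → ℂ) :
    tensorSum α β = gS (fun p : ℕ × ℕ => ‖α p.1‖ * ‖β p.2‖) := rfl

lemma tensorSeq_eq_gd (α β : ℕ → ℂ) :
    tensorSeq α β = gd (fun p : ℕ × ℕ => ‖α p.1‖ * ‖β p.2‖) := rfl

lemma fin_strictMono_le {n : ℕ} {g : Fin n → ℕ} (hg : StrictMono g) (k : Fin n) :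
    (k : ℕ) ≤ g k := by
  obtain ⟨m, hm⟩ : ∃ m, (k:ℕ) = m := ⟨_, rfl⟩
  induction m generalizing k with
  | zero => omega
  | succ m ih =>
    have hmn : m < n := by omega
    have hv : ((⟨m, hmn⟩ : Fin n) : ℕ) = m := rfl
    have hlt : (⟨m, hmn⟩ : Fin n) < k := by
      rw [Fin.lt_def, hv]; omega
    have := hg hlt
    have := ih ⟨m, hmn⟩ hv
    omega

/-- sum over any `n`-element subset of an antitone null sequence is at most
the sum of the first `n` terms -/
lemma gS_antitone_eq {f : ℕ → ℝ} (hf : Null f) (ha : Antitone f) (n : ℕ) :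
    gS f n = ∑ k ∈ Finset.range n, f k := by
  refine le_antisymm ?_ (hf.le_gS (by simp))
  refine hf.gS_le fun F hF => ?_
  have key : ∀ k : Fin n, f ((F.orderIsoOfFin hF k : ℕ)) ≤ f k := by
    intro k
    refine ha ?_
    have hsm : StrictMono (fun k : Fin n => ((F.orderIsoOfFin hF k : ℕ))) := by
      intro x y hxy
      exact (F.orderIsoOfFin hF).lt_iff_lt.mpr hxy
    exact fin_strictMono_le hsm k
  calc ∑ i ∈ F, f i = ∑ k : Fin n, f ((F.orderIsoOfFin hF k : ℕ)) := by
        rw [← Finset.sum_attach F (fun i => f i)]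
        exact Fintype.sum_equiv (F.orderIsoOfFin hF).toEquiv.symm _ _
          (by intro x; simp)
    _ ≤ ∑ k : Fin n, f (k : ℕ) := Finset.sum_le_sum fun k _ => key k
    _ = ∑ k ∈ Finset.range n, f k := by rw [Finset.sum_range fun k => f k]

/-- the rearrangement of (the complexification of) a nonneg antitone null sequence
is the sequence itself -/
lemma rearr_toC_self {f : ℕ → ℝ} (h0 : ∀ n, 0 ≤ f n) (ha : Antitone f)
    (hl : Filter.Tendsto f Filter.atTop (nhds 0)) : rearr (toC f) = f := by
  have hnorm : (fun i => ‖toC f i‖) = f := by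
    funext i
    simp [toC, Complex.norm_real, abs_of_nonneg (h0 i)]
  have hnull : Null f := null_real h0 ha hl
  funext n
  rw [rearr_eq_gd, hnorm, gd, gS_antitone_eq hnull ha, gS_antitone_eq hnull ha,
    Finset.sum_range_succ]
  ring

end CalkinAux

namespace CalkinAux

section Tensor

variable {α β : ℕ → ℂ}

/-- the tensor partial sums only depend on the rearrangements -/
lemma tensorSum_eq_rearr (hα : α ∈ c0) (hβ : β ∈ c0) (n : ℕ) :
    tensorSum α β n = gS (fun q : ℕ × ℕ => rearr α q.1 * rearr β q.2) n := by
  classical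
  set vα : ℕ → ℝ := fun i => ‖α i‖ with hvαdef
  set vβ : ℕ → ℝ := fun i => ‖β i‖ with hvβdef
  have hvα : Null vα := null_norm hα
  have hvβ : Null vβ := null_norm hβ
  have hA : rearr α = gd vα := rearr_eq_gd α
  have hB : rearr β = gd vβ := rearr_eq_gd β
  have hAnull : Null (rearr α) := by
    rw [hA]; exact null_real (gd_nonneg hvα) (gd_antitone hvα) (gd_tendsto_zero hvα)
  have hBnull : Null (rearr β) := by
    rw [hB]; exact null_real (gd_nonneg hvβ) (gd_antitone hvβ) (gd_tendsto_zero hvβ)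
  have hc : Null (fun q : ℕ × ℕ => rearr α q.1 * rearr β q.2) := null_prod hAnull hBnull
  have hT : Null (fun q : ℕ × ℕ => ‖α q.1‖ * ‖β q.2‖) := null_tensor hα hβ
  rw [tensorSum_eq_gS]
  refine le_antisymm ?_ ?_
  · -- any finite sum of |α i||β j| is dominated via the ranking injection
    refine hT.gS_le fun F hF => ?_
    obtain ⟨rA, hrAinj, hrA⟩ := exists_ranking hvα (F.image Prod.fst)
    obtain ⟨rB, hrBinj, hrB⟩ := exists_ranking hvβ (F.image Prod.snd)
    set φ : ℕ × ℕ → ℕ × ℕ := fun q => (rA q.1, rB q.2) with hφ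
    have hφinj : ∀ q ∈ F, ∀ q' ∈ F, φ q = φ q' → q = q' := by
      intro q hq q' hq' h
      have h1 : rA q.1 = rA q'.1 := congrArg Prod.fst h
      have h2 : rB q.2 = rB q'.2 := congrArg Prod.snd h
      have e1 : q.1 = q'.1 := hrAinj (Finset.mem_coe.mpr (Finset.mem_image_of_mem _ hq))
        (Finset.mem_coe.mpr (Finset.mem_image_of_mem _ hq')) h1
      have e2 : q.2 = q'.2 := hrBinj (Finset.mem_coe.mpr (Finset.mem_image_of_mem _ hq))
        (Finset.mem_coe.mpr (Finset.mem_image_of_mem _ hq')) h2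
      exact Prod.ext e1 e2
    have hstep : ∑ q ∈ F, ‖α q.1‖ * ‖β q.2‖ ≤
        ∑ q ∈ F, rearr α (rA q.1) * rearr β (rB q.2) := by
      refine Finset.sum_le_sum fun q hq => ?_
      have h1 : vα q.1 ≤ gd vα (rA q.1) := (hrA q.1 (Finset.mem_image_of_mem _ hq)).2
      have h2 : vβ q.2 ≤ gd vβ (rB q.2) := (hrB q.2 (Finset.mem_image_of_mem _ hq)).2
      rw [hA, hB]
      exact mul_le_mul h1 h2 (hvβ.nonneg _) (le_trans (hvα.nonneg _) h1)
    refine hstep.trans ?_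
    have him : ∑ q ∈ F, rearr α (rA q.1) * rearr β (rB q.2) =
        ∑ q ∈ F.image φ, rearr α q.1 * rearr β q.2 := by
      rw [Finset.sum_image hφinj]
    rw [him]
    exact hc.le_gS (by rw [Finset.card_image_of_injOn hφinj, hF])
  · -- conversely the rearranged products are attained
    refine hc.gS_le fun F hF => ?_
    set ψ : ℕ × ℕ → ℕ × ℕ := fun q => (ge hvα q.1, ge hvβ q.2) with hψ
    have hψinj : ∀ q ∈ F, ∀ q' ∈ F, ψ q = ψ q' → q = q' := by
      intro q _ q' _ h
      exact Prod.ext (ge_inj hvα (congrArg Prod.fst h)) (ge_inj hvβ (congrArg Prod.snd h))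
    have hval : ∀ q : ℕ × ℕ, rearr α q.1 * rearr β q.2 = ‖α (ge hvα q.1)‖ * ‖β (ge hvβ q.2)‖ := by
      intro q
      rw [hA, hB, gd_eq hvα, gd_eq hvβ]
    calc ∑ q ∈ F, rearr α q.1 * rearr β q.2
        = ∑ q ∈ F, ‖α (ψ q).1‖ * ‖β (ψ q).2‖ := by
          refine Finset.sum_congr rfl fun q _ => ?_
          rw [hval q]
      _ = ∑ q ∈ F.image ψ, ‖α q.1‖ * ‖β q.2‖ := by rw [Finset.sum_image hψinj]
      _ ≤ _ := hT.le_gS (by rw [Finset.card_image_of_injOn hψinj, hF])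

lemma tensorSeq_eq_gd_rearr (hα : α ∈ c0) (hβ : β ∈ c0) :
    tensorSeq α β = gd (fun q : ℕ × ℕ => rearr α q.1 * rearr β q.2) := by
  funext n
  rw [tensorSeq, tensorSum_eq_rearr hα hβ, tensorSum_eq_rearr hα hβ, gd]

end Tensor


section Main

variable {w : ℕ → ℝ} {p C : ℝ} {α β : ℕ → ℂ}

lemma main_partial_bound (hwa : Antitone w) (hwpos : ∀ n, 0 < w n)
    (hp : 1 ≤ p) (hC : 0 < C)
    (hsub : ∀ m n : ℕ, w ((m + 1) * (n + 1) - 1) ≤ C * (w m * w n))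
    (hα : α ∈ lorentzSpace w p) (hβ : β ∈ lorentzSpace w p) (N : ℕ) :
    ∑ k ∈ Finset.range N, w k * (tensorSeq α β k) ^ p ≤
      C * ((∑' n, w n * rearr α n ^ p) * (∑' n, w n * rearr β n ^ p)) := by
  classical
  obtain ⟨hαc, hαs⟩ := hα
  obtain ⟨hβc, hβs⟩ := hβ
  set A : ℕ → ℝ := rearr α with hAdef
  set B : ℕ → ℝ := rearr β with hBdef
  have hvα : Null (fun i => ‖α i‖) := null_norm hαc
  have hvβ : Null (fun i => ‖β i‖) := null_norm hβc
  have hAnull : Null A := by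
    rw [hAdef, rearr_eq_gd]
    exact null_real (gd_nonneg hvα) (gd_antitone hvα) (gd_tendsto_zero hvα)
  have hBnull : Null B := by
    rw [hBdef, rearr_eq_gd]
    exact null_real (gd_nonneg hvβ) (gd_antitone hvβ) (gd_tendsto_zero hvβ)
  have hAanti : Antitone A := by rw [hAdef, rearr_eq_gd]; exact gd_antitone hvα
  have hBanti : Antitone B := by rw [hBdef, rearr_eq_gd]; exact gd_antitone hvβ
  set c : ℕ × ℕ → ℝ := fun q => A q.1 * B q.2 with hcdef
  have hc : Null c := null_prod hAnull hBnull
  have hγ : tensorSeq α β = gd c := tensorSeq_eq_gd_rearr hαc hβc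
  set f : ℕ → ℝ := fun i => w i * A i ^ p with hfdef
  set g : ℕ → ℝ := fun j => w j * B j ^ p with hgdef
  have hf0 : ∀ i, 0 ≤ f i := fun i =>
    mul_nonneg (hwpos i).le (Real.rpow_nonneg (hAnull.nonneg i) p)
  have hg0 : ∀ j, 0 ≤ g j := fun j =>
    mul_nonneg (hwpos j).le (Real.rpow_nonneg (hBnull.nonneg j) p)
  have hX0 : 0 ≤ ∑' n, f n := tsum_nonneg hf0
  have hY0 : 0 ≤ ∑' n, g n := tsum_nonneg hg0
  -- key termwise bound
  have hterm : ∀ k, 0 < gd c k →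
      w k * (gd c k) ^ p ≤ C * (f (ge hc k).1 * g (ge hc k).2) := by
    intro k hk
    set q : ℕ × ℕ := ge hc k with hqdef
    set i : ℕ := q.1
    set j : ℕ := q.2
    have hgdk : gd c k = A i * B j := by rw [gd_eq hc]
    -- all pairs coordinatewise below q were picked earlier
    have hD : (Finset.range (i+1) ×ˢ Finset.range (j+1)).erase q ⊆ gE hc k := by
      intro q' hq'
      rw [Finset.mem_erase, Finset.mem_product, Finset.mem_range, Finset.mem_range] at hq'
      obtain ⟨hne, h1, h2⟩ := hq'
      have hle : q' ≤ q := ⟨by omega, by omega⟩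
      have hlt : q' < q := lt_of_le_of_ne hle hne
      have hge : c q ≤ c q' :=
        mul_le_mul (hAanti (by omega : q'.1 ≤ i)) (hBanti (by omega : q'.2 ≤ j))
          (hBnull.nonneg _) (hAnull.nonneg _)
      by_contra hmem
      have hx : c q' < c (ge hc k) := ge_min hc hmem (by rw [← hqdef]; exact hlt)
      have hx' : c q' < c q := by rw [hqdef]; exact hx
      linarith
    have hcard : (i+1) * (j+1) - 1 ≤ k := by
      have h1 : ((Finset.range (i+1) ×ˢ Finset.range (j+1)).erase q).card =
          (i+1) * (j+1) - 1 := by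
        rw [Finset.card_erase_of_mem (by
          rw [Finset.mem_product, Finset.mem_range, Finset.mem_range]; omega),
          Finset.card_product, Finset.card_range, Finset.card_range]
      have h2 := Finset.card_le_card hD
      rw [h1, gE_card hc] at h2
      exact h2
    have hw1 : w k ≤ w ((i+1) * (j+1) - 1) := hwa hcard
    have hw2 : w ((i+1) * (j+1) - 1) ≤ C * (w i * w j) := hsub i j
    have hpow : (gd c k) ^ p = A i ^ p * B j ^ p := by
      rw [hgdk, Real.mul_rpow (hAnull.nonneg i) (hBnull.nonneg j)]
    rw [hpow]
    have hABp : 0 ≤ A i ^ p * B j ^ p :=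
      mul_nonneg (Real.rpow_nonneg (hAnull.nonneg i) p) (Real.rpow_nonneg (hBnull.nonneg j) p)
    calc w k * (A i ^ p * B j ^ p) ≤ (C * (w i * w j)) * (A i ^ p * B j ^ p) :=
          mul_le_mul_of_nonneg_right (hw1.trans hw2) hABp
      _ = C * (f (ge hc k).1 * g (ge hc k).2) := by rw [hfdef, hgdef]; ring
  -- sum over the positive part
  set P : Finset ℕ := (Finset.range N).filter (fun k => 0 < gd c k) with hPdef
  have hsplit : ∑ k ∈ Finset.range N, w k * (gd c k) ^ p = ∑ k ∈ P, w k * (gd c k) ^ p := by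
    rw [hPdef]
    refine (Finset.sum_filter_of_ne ?_).symm
    intro k _ hne
    rcases (gd_nonneg hc k).lt_or_eq with hpos | heq
    · exact hpos
    · exact absurd (by rw [← heq, Real.zero_rpow (show p ≠ 0 by linarith), mul_zero]) hne
  set Q : Finset (ℕ × ℕ) := P.image (ge hc) with hQdef
  have hQcard : ∀ k ∈ P, ∀ k' ∈ P, ge hc k = ge hc k' → k = k' :=
    fun k _ k' _ h => ge_inj hc h
  have hsum2 : ∑ k ∈ P, C * (f (ge hc k).1 * g (ge hc k).2) =
      C * ∑ q ∈ Q, f q.1 * g q.2 := by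
    rw [hQdef, Finset.sum_image hQcard, Finset.mul_sum]
  have hsum3 : ∑ q ∈ Q, f q.1 * g q.2 ≤
      (∑ i ∈ Q.image Prod.fst, f i) * (∑ j ∈ Q.image Prod.snd, g j) := by
    have h1 : ∑ q ∈ Q, f q.1 * g q.2 ≤
        ∑ q ∈ (Q.image Prod.fst) ×ˢ (Q.image Prod.snd), f q.1 * g q.2 := by
      refine Finset.sum_le_sum_of_subset_of_nonneg ?_ ?_
      · intro q hq
        rw [Finset.mem_product]
        exact ⟨Finset.mem_image_of_mem _ hq, Finset.mem_image_of_mem _ hq⟩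
      · intro q _ _
        exact mul_nonneg (hf0 _) (hg0 _)
    have h2 : (∑ q ∈ (Q.image Prod.fst) ×ˢ (Q.image Prod.snd), f q.1 * g q.2) =
        (∑ i ∈ Q.image Prod.fst, f i) * (∑ j ∈ Q.image Prod.snd, g j) := by
      rw [Finset.sum_product, Finset.sum_mul_sum]
    rw [← h2]
    exact h1
  have hsum4 : (∑ i ∈ Q.image Prod.fst, f i) * (∑ j ∈ Q.image Prod.snd, g j) ≤
      (∑' n, f n) * (∑' n, g n) := by
    refine mul_le_mul (Summable.sum_le_tsum _ (fun i _ => hf0 i) hαs)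
      (Summable.sum_le_tsum _ (fun j _ => hg0 j) hβs)
      (Finset.sum_nonneg fun j _ => hg0 j) hX0
  calc ∑ k ∈ Finset.range N, w k * (tensorSeq α β k) ^ p
      = ∑ k ∈ P, w k * (gd c k) ^ p := by rw [hγ, hsplit]
    _ ≤ ∑ k ∈ P, C * (f (ge hc k).1 * g (ge hc k).2) := by
        refine Finset.sum_le_sum fun k hk => ?_
        rw [hPdef, Finset.mem_filter] at hk
        exact hterm k hk.2
    _ = C * ∑ q ∈ Q, f q.1 * g q.2 := hsum2
    _ ≤ C * ((∑' n, f n) * (∑' n, g n)) := by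
        refine mul_le_mul_of_nonneg_left (hsum3.trans hsum4) hC.le
  
end Main


section Lorentz

variable {ι : Type} [DecidableEq ι] [Infinite ι] [PartialOrder ι] [WellFoundedLT ι]
variable {v : ι → ℝ}

lemma Null.gS_mono (hv : Null v) : Monotone (gS v) := by
  intro m n h
  rw [gS_eq hv, gS_eq hv]
  exact Finset.sum_le_sum_of_subset_of_nonneg (Finset.range_subset_range.mpr h)
    (fun k _ _ => hv.nonneg _)

lemma gt_gd_subset (hv : Null v) (m : ℕ) : {i | gd v m < v i} ⊆ ↑(gE hv m) := by
  intro i hi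
  simp only [Set.mem_setOf_eq] at hi
  by_contra h
  have := ge_max hv (show i ∉ gE hv m from h)
  rw [← gd_eq hv] at this
  exact absurd this (not_le.mpr hi)

lemma gS_smul (hv : Null v) {t : ℝ} (ht : 0 ≤ t) (n : ℕ) :
    gS (fun i => t * v i) n = t * gS v n := by
  have h1 : ((fun F : Finset ι => ∑ i ∈ F, t * v i) '' {F | F.card = n}) =
      (fun x => t * x) '' ((fun F : Finset ι => ∑ i ∈ F, v i) '' {F | F.card = n}) := by
    rw [← Set.image_comp]
    congr 1
    funext F
    simp [Finset.mul_sum]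
  rw [gS, h1]
  exact (Monotone.map_csSup_of_continuousAt
    (continuousAt_id.const_mul t)
    (fun x y hxy => mul_le_mul_of_nonneg_left hxy ht)
    (gS_nonempty n) (hv.bddAbove n)).symm

end Lorentz

section LorentzSpace

variable {w : ℕ → ℝ} {p : ℝ} {α β : ℕ → ℂ}

lemma rearr_nonneg (hα : α ∈ c0) (n : ℕ) : 0 ≤ rearr α n := by
  rw [rearr_eq_gd]; exact gd_nonneg (null_norm hα) n

lemma rearr_antitone (hα : α ∈ c0) : Antitone (rearr α) := by
  rw [rearr_eq_gd]; exact gd_antitone (null_norm hα)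

lemma rearr_tendsto (hα : α ∈ c0) : Filter.Tendsto (rearr α) Filter.atTop (nhds 0) := by
  rw [rearr_eq_gd]; exact gd_tendsto_zero (null_norm hα)

lemma zero_mem_c0 : (0 : ℕ → ℂ) ∈ c0 := tendsto_const_nhds

lemma rearr_zero : rearr (0 : ℕ → ℂ) = 0 := by
  have h := rearr_toC_self (f := fun _ => (0:ℝ)) (fun n => le_refl 0)
    (fun _ _ _ => le_refl 0) tendsto_const_nhds
  have he : toC (fun _ => (0:ℝ)) = (0 : ℕ → ℂ) := by funext n; simp [toC]
  rw [he] at h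
  rw [h]
  rfl

lemma zero_mem_lorentz (hwpos : ∀ n, 0 < w n) (hp : 1 ≤ p) :
    (0 : ℕ → ℂ) ∈ lorentzSpace w p := by
  refine ⟨zero_mem_c0, ?_⟩
  have : (fun n => w n * rearr (0 : ℕ → ℂ) n ^ p) = fun _ => 0 := by
    funext n
    rw [rearr_zero]
    simp [Real.zero_rpow (show p ≠ 0 by linarith)]
  rw [this]
  exact summable_zero

lemma smul_mem_lorentz (hwpos : ∀ n, 0 < w n) (hp : 1 ≤ p) (cc : ℂ)
    (hα : α ∈ lorentzSpace w p) : cc • α ∈ lorentzSpace w p := by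
  obtain ⟨hαc, hαs⟩ := hα
  have hc0 : cc • α ∈ c0 := by
    have := hαc.const_mul cc
    have h2 : Filter.Tendsto (fun x => cc * α x) Filter.atTop (nhds 0) := by simpa using this
    exact h2
  have hre : ∀ n, rearr (cc • α) n = ‖cc‖ * rearr α n := by
    intro n
    have hv : (fun i => ‖(cc • α) i‖) = fun i => ‖cc‖ * ‖α i‖ := by
      funext i; simp [norm_smul]
    rw [rearr_eq_gd, hv, gd, gS_smul (null_norm hαc) (norm_nonneg cc),
      gS_smul (null_norm hαc) (norm_nonneg cc), rearr_eq_gd, gd]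
    ring
  refine ⟨hc0, ?_⟩
  have : (fun n => w n * rearr (cc • α) n ^ p) =
      fun n => ‖cc‖ ^ p * (w n * rearr α n ^ p) := by
    funext n
    rw [hre n, Real.mul_rpow (norm_nonneg cc) (rearr_nonneg hαc n)]
    ring
  rw [this]
  exact hαs.mul_left _

lemma rearr_add_le (hα : α ∈ c0) (hβ : β ∈ c0) (m n : ℕ) :
    rearr (α + β) (m + n) ≤ rearr α m + rearr β n := by
  classical
  have hαβ : α + β ∈ c0 := by
    have := hα.add hβ
    have h2 : Filter.Tendsto (fun x => α x + β x) Filter.atTop (nhds 0) := by simpa using this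
    exact h2
  rw [rearr_eq_gd]
  refine gd_le_of_count (null_norm hαβ) (S := gE (null_norm hα) m ∪ gE (null_norm hβ) n)
    ?_ ?_
  · intro i hi
    have htri : ‖(α + β) i‖ ≤ ‖α i‖ + ‖β i‖ := by
      simpa using norm_add_le (α i) (β i)
    by_cases h1 : rearr α m < ‖α i‖
    · refine Finset.mem_union_left _ ?_
      have := gt_gd_subset (null_norm hα) m (show _ from by
        simp only [Set.mem_setOf_eq]; rw [← rearr_eq_gd]; exact h1)
      exact this
    · refine Finset.mem_union_right _ ?_
      push_neg at h1
      have h2 : rearr β n < ‖β i‖ := by linarith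
      have := gt_gd_subset (null_norm hβ) n (show _ from by
        simp only [Set.mem_setOf_eq]; rw [← rearr_eq_gd]; exact h2)
      exact this
  · calc (gE (null_norm hα) m ∪ gE (null_norm hβ) n).card ≤
        (gE (null_norm hα) m).card + (gE (null_norm hβ) n).card := Finset.card_union_le _ _
      _ = m + n := by rw [gE_card, gE_card]

lemma half_sum_le {h : ℕ → ℝ} (h0 : ∀ n, 0 ≤ h n) (N : ℕ) :
    ∑ k ∈ Finset.range N, h (k / 2) ≤ 2 * ∑ n ∈ Finset.range N, h n := by
  have key : ∀ M, ∑ k ∈ Finset.range (2 * M), h (k / 2) = 2 * ∑ n ∈ Finset.range M, h n := by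
    intro M
    induction M with
    | zero => simp
    | succ M ih =>
      have e1 : 2 * (M + 1) = (2 * M + 1) + 1 := by ring
      rw [e1, Finset.sum_range_succ, Finset.sum_range_succ, ih, Finset.sum_range_succ]
      have e2 : (2 * M) / 2 = M := by omega
      have e3 : (2 * M + 1) / 2 = M := by omega
      rw [e2, e3]
      ring
  calc ∑ k ∈ Finset.range N, h (k / 2) ≤ ∑ k ∈ Finset.range (2 * N), h (k / 2) :=
      Finset.sum_le_sum_of_subset_of_nonneg
        (Finset.range_subset_range.mpr (by omega)) (fun k _ _ => h0 _)
    _ = 2 * ∑ n ∈ Finset.range N, h n := key N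

lemma rpow_add_le {x y : ℝ} (hx : 0 ≤ x) (hy : 0 ≤ y) {p : ℝ} (hp : 1 ≤ p) :
    (x + y) ^ p ≤ 2 ^ p * (x ^ p + y ^ p) := by
  have hp0 : 0 ≤ p := by linarith
  have h1 : (x + y) ^ p ≤ (2 * max x y) ^ p := by
    refine Real.rpow_le_rpow (by linarith) ?_ hp0
    rcases le_total x y with h | h
    · rw [max_eq_right h]; linarith
    · rw [max_eq_left h]; linarith
  have h2 : (2 * max x y) ^ p = 2 ^ p * (max x y) ^ p :=
    Real.mul_rpow (by norm_num) (le_max_of_le_left hx)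
  have h3 : (max x y) ^ p ≤ x ^ p + y ^ p := by
    rcases le_total x y with h | h
    · rw [max_eq_right h]
      have := Real.rpow_nonneg hx p
      linarith
    · rw [max_eq_left h]
      have := Real.rpow_nonneg hy p
      linarith
  calc (x + y) ^ p ≤ 2 ^ p * (max x y) ^ p := by rw [← h2]; exact h1
    _ ≤ 2 ^ p * (x ^ p + y ^ p) := by
        have : (0:ℝ) ≤ 2 ^ p := Real.rpow_nonneg (by norm_num) p
        nlinarith [h3]

lemma add_mem_lorentz (hwa : Antitone w) (hwpos : ∀ n, 0 < w n) (hp : 1 ≤ p)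
    (hα : α ∈ lorentzSpace w p) (hβ : β ∈ lorentzSpace w p) :
    α + β ∈ lorentzSpace w p := by
  obtain ⟨hαc, hαs⟩ := hα
  obtain ⟨hβc, hβs⟩ := hβ
  have hαβ : α + β ∈ c0 := by
    have := hαc.add hβc
    have h2 : Filter.Tendsto (fun x => α x + β x) Filter.atTop (nhds 0) := by simpa using this
    exact h2
  refine ⟨hαβ, ?_⟩
  set h : ℕ → ℝ := fun n => w n * rearr α n ^ p + w n * rearr β n ^ p with hhdef
  have hh0 : ∀ n, 0 ≤ h n := fun n => add_nonneg
    (mul_nonneg (hwpos n).le (Real.rpow_nonneg (rearr_nonneg hαc n) p))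
    (mul_nonneg (hwpos n).le (Real.rpow_nonneg (rearr_nonneg hβc n) p))
  have hhs : Summable h := hαs.add hβs
  have hterm : ∀ k, w k * rearr (α + β) k ^ p ≤ 2 ^ p * h (k / 2) := by
    intro k
    have h1 : rearr (α + β) k ≤ rearr α (k / 2) + rearr β (k / 2) := by
      calc rearr (α + β) k ≤ rearr (α + β) (k / 2 + k / 2) :=
          rearr_antitone hαβ (by omega)
        _ ≤ _ := rearr_add_le hαc hβc _ _
    have h2 : rearr (α + β) k ^ p ≤ (rearr α (k / 2) + rearr β (k / 2)) ^ p :=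
      Real.rpow_le_rpow (rearr_nonneg hαβ k) h1 (by linarith)
    have h3 := rpow_add_le (rearr_nonneg hαc (k/2)) (rearr_nonneg hβc (k/2)) hp
    have h4 : w k ≤ w (k / 2) := hwa (by omega)
    have h5 : 0 ≤ rearr (α + β) k ^ p := Real.rpow_nonneg (rearr_nonneg hαβ k) p
    have h6 : (0:ℝ) ≤ 2 ^ p := Real.rpow_nonneg (by norm_num) p
    calc w k * rearr (α + β) k ^ p ≤ w (k / 2) * rearr (α + β) k ^ p :=
        mul_le_mul_of_nonneg_right h4 h5
      _ ≤ w (k / 2) * ((2:ℝ) ^ p * (rearr α (k/2) ^ p + rearr β (k/2) ^ p)) := by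
          refine mul_le_mul_of_nonneg_left (h2.trans h3) (hwpos _).le
      _ = 2 ^ p * h (k / 2) := by rw [hhdef]; ring
  refine summable_of_sum_range_le (c := 2 ^ p * (2 * ∑' n, h n)) ?_ ?_
  · intro k
    exact mul_nonneg (hwpos k).le (Real.rpow_nonneg (rearr_nonneg hαβ k) p)
  · intro N
    calc ∑ k ∈ Finset.range N, w k * rearr (α + β) k ^ p
        ≤ ∑ k ∈ Finset.range N, 2 ^ p * h (k / 2) := Finset.sum_le_sum fun k _ => hterm k
      _ = 2 ^ p * ∑ k ∈ Finset.range N, h (k / 2) := by rw [Finset.mul_sum]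
      _ ≤ 2 ^ p * (2 * ∑ n ∈ Finset.range N, h n) := by
          refine mul_le_mul_of_nonneg_left (half_sum_le hh0 N)
            (Real.rpow_nonneg (by norm_num) p)
      _ ≤ 2 ^ p * (2 * ∑' n, h n) := by
          refine mul_le_mul_of_nonneg_left ?_ (Real.rpow_nonneg (by norm_num) p)
          have := Summable.sum_le_tsum (Finset.range N) (fun n _ => hh0 n) hhs
          linarith

lemma dominated_mem_lorentz (hwpos : ∀ n, 0 < w n) (hp : 1 ≤ p)
    (hα : α ∈ lorentzSpace w p) (hβ : β ∈ c0) (hdom : ∀ n, rearr β n ≤ rearr α n) :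
    β ∈ lorentzSpace w p := by
  obtain ⟨hαc, hαs⟩ := hα
  refine ⟨hβ, ?_⟩
  refine Summable.of_nonneg_of_le (fun k => mul_nonneg (hwpos k).le
    (Real.rpow_nonneg (rearr_nonneg hβ k) p)) (fun k => ?_) hαs
  exact mul_le_mul_of_nonneg_left
    (Real.rpow_le_rpow (rearr_nonneg hβ k) (hdom k) (by linarith)) (hwpos k).le

lemma lorentz_isCalkin (hwa : Antitone w) (hwpos : ∀ n, 0 < w n) (hp : 1 ≤ p) :
    IsCalkinSpace (lorentzSpace w p) := by
  refine ⟨fun α hα => hα.1, zero_mem_lorentz hwpos hp, ?_, ?_, ?_⟩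
  · intro α hα β hβ
    exact add_mem_lorentz hwa hwpos hp hα hβ
  · intro cc α hα
    exact smul_mem_lorentz hwpos hp cc hα
  · intro α hα β hβ hdom
    exact dominated_mem_lorentz hwpos hp hα hβ hdom

end LorentzSpace


section Final

variable {w : ℕ → ℝ} {p C : ℝ} {α β : ℕ → ℂ}

lemma tensorSeq_nonneg (hα : α ∈ c0) (hβ : β ∈ c0) (n : ℕ) : 0 ≤ tensorSeq α β n := by
  rw [tensorSeq_eq_gd]; exact gd_nonneg (null_tensor hα hβ) n

lemma tensorSeq_antitone (hα : α ∈ c0) (hβ : β ∈ c0) : Antitone (tensorSeq α β) := by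
  rw [tensorSeq_eq_gd]; exact gd_antitone (null_tensor hα hβ)

lemma tensorSeq_tendsto (hα : α ∈ c0) (hβ : β ∈ c0) :
    Filter.Tendsto (tensorSeq α β) Filter.atTop (nhds 0) := by
  rw [tensorSeq_eq_gd]; exact gd_tendsto_zero (null_tensor hα hβ)

lemma toC_mem_c0 {f : ℕ → ℝ} (hf : Filter.Tendsto f Filter.atTop (nhds 0)) :
    toC f ∈ c0 := by
  have := (Complex.continuous_ofReal.tendsto 0).comp hf
  exact (by simpa using this : Filter.Tendsto (Complex.ofReal ∘ f) Filter.atTop (nhds 0))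

lemma rearr_toC_tensorSeq (hα : α ∈ c0) (hβ : β ∈ c0) :
    rearr (toC (tensorSeq α β)) = tensorSeq α β :=
  rearr_toC_self (tensorSeq_nonneg hα hβ) (tensorSeq_antitone hα hβ) (tensorSeq_tendsto hα hβ)

lemma tensor_summable (hwa : Antitone w) (hwpos : ∀ n, 0 < w n)
    (hp : 1 ≤ p) (hC : 0 < C)
    (hsub : ∀ m n : ℕ, w ((m + 1) * (n + 1) - 1) ≤ C * (w m * w n))
    (hα : α ∈ lorentzSpace w p) (hβ : β ∈ lorentzSpace w p) :
    Summable (fun k => w k * (tensorSeq α β k) ^ p) := by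
  refine summable_of_sum_range_le
    (c := C * ((∑' n, w n * rearr α n ^ p) * (∑' n, w n * rearr β n ^ p)))
    (fun k => mul_nonneg (hwpos k).le
      (Real.rpow_nonneg (tensorSeq_nonneg hα.1 hβ.1 k) p))
    (fun N => main_partial_bound hwa hwpos hp hC hsub hα hβ N)

lemma tensor_mem_lorentz (hwa : Antitone w) (hwpos : ∀ n, 0 < w n)
    (hp : 1 ≤ p) (hC : 0 < C)
    (hsub : ∀ m n : ℕ, w ((m + 1) * (n + 1) - 1) ≤ C * (w m * w n))
    (hα : α ∈ lorentzSpace w p) (hβ : β ∈ lorentzSpace w p) :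
    toC (tensorSeq α β) ∈ lorentzSpace w p := by
  refine ⟨toC_mem_c0 (tensorSeq_tendsto hα.1 hβ.1), ?_⟩
  have h := tensor_summable hwa hwpos hp hC hsub hα hβ
  have he : (fun k => w k * rearr (toC (tensorSeq α β)) k ^ p) =
      fun k => w k * (tensorSeq α β k) ^ p := by
    funext k
    rw [rearr_toC_tensorSeq hα.1 hβ.1]
  rw [he]
  exact h

lemma tensor_norm_bound (hwa : Antitone w) (hwpos : ∀ n, 0 < w n)
    (hp : 1 ≤ p) (hC : 0 < C)
    (hsub : ∀ m n : ℕ, w ((m + 1) * (n + 1) - 1) ≤ C * (w m * w n))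
    (hα : α ∈ lorentzSpace w p) (hβ : β ∈ lorentzSpace w p) :
    lorentzNorm w p (toC (tensorSeq α β)) ≤
      C ^ (1 / p) * (lorentzNorm w p α * lorentzNorm w p β) := by
  set X : ℝ := ∑' n, w n * rearr α n ^ p with hX
  set Y : ℝ := ∑' n, w n * rearr β n ^ p with hY
  have hX0 : 0 ≤ X := tsum_nonneg fun n => mul_nonneg (hwpos n).le
    (Real.rpow_nonneg (rearr_nonneg hα.1 n) p)
  have hY0 : 0 ≤ Y := tsum_nonneg fun n => mul_nonneg (hwpos n).le
    (Real.rpow_nonneg (rearr_nonneg hβ.1 n) p)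
  have hts : (∑' k, w k * rearr (toC (tensorSeq α β)) k ^ p) ≤ C * (X * Y) := by
    have he : (fun k => w k * rearr (toC (tensorSeq α β)) k ^ p) =
        fun k => w k * (tensorSeq α β k) ^ p := by
      funext k
      rw [rearr_toC_tensorSeq hα.1 hβ.1]
    rw [he]
    exact Real.tsum_le_of_sum_range_le
      (fun k => mul_nonneg (hwpos k).le
        (Real.rpow_nonneg (tensorSeq_nonneg hα.1 hβ.1 k) p))
      (fun N => main_partial_bound hwa hwpos hp hC hsub hα hβ N)
  have hts0 : 0 ≤ ∑' k, w k * rearr (toC (tensorSeq α β)) k ^ p :=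
    tsum_nonneg fun k => mul_nonneg (hwpos k).le
      (Real.rpow_nonneg (rearr_nonneg (toC_mem_c0 (tensorSeq_tendsto hα.1 hβ.1)) k) p)
  have h1p : (0:ℝ) ≤ 1 / p := by positivity
  calc lorentzNorm w p (toC (tensorSeq α β))
      = (∑' k, w k * rearr (toC (tensorSeq α β)) k ^ p) ^ (1/p) := rfl
    _ ≤ (C * (X * Y)) ^ (1/p) := Real.rpow_le_rpow hts0 hts h1p
    _ = C ^ (1/p) * (X ^ (1/p) * Y ^ (1/p)) := by
        rw [Real.mul_rpow hC.le (mul_nonneg hX0 hY0), Real.mul_rpow hX0 hY0]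
    _ = C ^ (1 / p) * (lorentzNorm w p α * lorentzNorm w p β) := rfl

/-- the delta sequence -/
def deltaSeq : ℕ → ℝ := fun n => if n = 0 then 1 else 0

lemma deltaSeq_nonneg : ∀ n, 0 ≤ deltaSeq n := by
  intro n; unfold deltaSeq; split <;> norm_num

lemma deltaSeq_antitone : Antitone deltaSeq := by
  intro m n h
  unfold deltaSeq
  rcases Nat.eq_zero_or_pos n with hn | hn
  · have hm : m = 0 := by omega
    simp [hm, hn]
  · rw [if_neg (by omega)]
    split <;> norm_num

lemma deltaSeq_tendsto : Filter.Tendsto deltaSeq Filter.atTop (nhds 0) := by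
  refine tendsto_const_nhds.congr' ?_
  filter_upwards [Filter.eventually_ge_atTop 1] with n hn
  unfold deltaSeq
  rw [if_neg (by omega)]

lemma delta_mem_lorentz (hwpos : ∀ n, 0 < w n) (hp : 1 ≤ p) :
    toC deltaSeq ∈ lorentzSpace w p := by
  refine ⟨toC_mem_c0 deltaSeq_tendsto, ?_⟩
  have hre : rearr (toC deltaSeq) = deltaSeq :=
    rearr_toC_self deltaSeq_nonneg deltaSeq_antitone deltaSeq_tendsto
  rw [hre]
  refine summable_of_ne_finset_zero (s := {0}) ?_
  intro k hk
  simp only [Finset.mem_singleton] at hk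
  unfold deltaSeq
  rw [if_neg hk, Real.zero_rpow (show p ≠ 0 by linarith), mul_zero]

lemma norm_toC_deltaSeq (j : ℕ) : ‖toC deltaSeq j‖ = deltaSeq j := by
  unfold toC
  rw [Complex.norm_real, Real.norm_eq_abs]
  exact abs_of_nonneg (deltaSeq_nonneg j)

/-- tensoring with the delta sequence recovers the rearrangement -/
lemma tensorSeq_delta (hα : α ∈ c0) : tensorSeq α (toC deltaSeq) = rearr α := by
  classical
  have hδ : toC deltaSeq ∈ c0 := toC_mem_c0 deltaSeq_tendsto
  have hT : Null (fun q : ℕ × ℕ => ‖α q.1‖ * ‖toC deltaSeq q.2‖) := null_tensor hα hδ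
  have hN : Null (fun i => ‖α i‖) := null_norm hα
  have key : ∀ n, tensorSum α (toC deltaSeq) n = rearrSum α n := by
    intro n
    rw [tensorSum_eq_gS, rearrSum_eq_gS]
    refine le_antisymm ?_ ?_
    · refine hT.gS_le fun F hF => ?_
      have hstep : ∑ q ∈ F, ‖α q.1‖ * ‖toC deltaSeq q.2‖ =
          ∑ q ∈ F.filter (fun q => q.2 = 0), ‖α q.1‖ := by
        rw [Finset.sum_filter]
        refine Finset.sum_congr rfl fun q _ => ?_
        rw [norm_toC_deltaSeq]
        unfold deltaSeq
        by_cases h : q.2 = 0 <;> simp [h]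
      rw [hstep]
      have hinj : ∀ q ∈ F.filter (fun q => q.2 = 0), ∀ q' ∈ F.filter (fun q => q.2 = 0),
          q.1 = q'.1 → q = q' := by
        intro q hq q' hq' h
        rw [Finset.mem_filter] at hq hq'
        exact Prod.ext h (hq.2.trans hq'.2.symm)
      have him : ∑ q ∈ F.filter (fun q => q.2 = 0), ‖α q.1‖ =
          ∑ i ∈ (F.filter (fun q => q.2 = 0)).image Prod.fst, ‖α i‖ := by
        rw [Finset.sum_image hinj]
      rw [him]
      calc ∑ i ∈ (F.filter (fun q => q.2 = 0)).image Prod.fst, ‖α i‖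
          ≤ gS (fun i => ‖α i‖) ((F.filter (fun q => q.2 = 0)).image Prod.fst).card :=
            hN.le_gS rfl
        _ ≤ gS (fun i => ‖α i‖) n := by
            refine hN.gS_mono ?_
            calc ((F.filter (fun q => q.2 = 0)).image Prod.fst).card
                ≤ (F.filter (fun q => q.2 = 0)).card := Finset.card_image_le
              _ ≤ F.card := Finset.card_filter_le _ _
              _ = n := hF
    · refine hN.gS_le fun F hF => ?_
      have hinj : ∀ i ∈ F, ∀ i' ∈ F, (i, (0:ℕ)) = (i', (0:ℕ)) → i = i' := by
        intro i _ i' _ h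
        exact congrArg Prod.fst h
      have : ∑ i ∈ F, ‖α i‖ = ∑ q ∈ F.image (fun i => (i, (0:ℕ))), ‖α q.1‖ * ‖toC deltaSeq q.2‖ := by
        rw [Finset.sum_image hinj]
        refine Finset.sum_congr rfl fun i _ => ?_
        rw [norm_toC_deltaSeq]
        unfold deltaSeq
        simp
      rw [this]
      exact hT.le_gS (by rw [Finset.card_image_of_injOn hinj, hF])
  funext n
  rw [tensorSeq, rearr, key, key]

lemma lorentz_stable_calkin (hwa : Antitone w) (hwpos : ∀ n, 0 < w n)
    (hp : 1 ≤ p) (hC : 0 < C)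
    (hsub : ∀ m n : ℕ, w ((m + 1) * (n + 1) - 1) ≤ C * (w m * w n)) :
    IsStableCalkin (lorentzSpace w p) := by
  refine ⟨lorentz_isCalkin hwa hwpos hp, ?_⟩
  apply Set.Subset.antisymm
  · exact Set.sInter_subset_of_mem ⟨lorentz_isCalkin hwa hwpos hp,
      fun a ha b hb => tensor_mem_lorentz hwa hwpos hp hC hsub ha hb⟩
  · intro a ha
    rw [calkinTensor]
    intro K hK
    obtain ⟨hKcalkin, hKtensor⟩ := hK
    have hδ : toC deltaSeq ∈ lorentzSpace w p := delta_mem_lorentz hwpos hp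
    have hmem : toC (tensorSeq a (toC deltaSeq)) ∈ K := hKtensor a ha _ hδ
    rw [tensorSeq_delta ha.1] at hmem
    refine hKcalkin.2.2.2.2 (toC (rearr a)) hmem a ha.1 fun n => ?_
    rw [rearr_toC_self (rearr_nonneg ha.1) (rearr_antitone ha.1) (rearr_tendsto ha.1)]

end Final

end CalkinAux

/-- Let `w` be a weight sequence with `w_{mn} ≤ C wₘ wₙ` and
`1 ≤ p < ∞`.  Then `‖α⊗β‖_{w,p} ≤ C^{1/p} ‖α‖_{w,p} ‖β‖_{w,p}` for `α, β ∈ ℓ_{w,p}`;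
in particular `ℓ_{w,p}` is a stable Calkin space.  (Sequences are 0-indexed, so
`w (m*n - 1)` with 1-indexed `m, n` reads `w ((m+1)*(n+1) - 1)`.) -/
theorem lorentz_stable (w : ℕ → ℝ) (hw1 : w 0 = 1) (hwa : Antitone w)
    (hwpos : ∀ n, 0 < w n)
    (hwc : Filter.Tendsto w Filter.atTop (nhds 0)) (hwns : ¬ Summable w)
    (p : ℝ) (hp : 1 ≤ p) (C : ℝ) (hC : 0 < C)
    (hsub : ∀ m n : ℕ, w ((m + 1) * (n + 1) - 1) ≤ C * (w m * w n)) :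
    (∀ α ∈ lorentzSpace w p, ∀ β ∈ lorentzSpace w p,
      lorentzNorm w p (toC (tensorSeq α β)) ≤
        C ^ (1 / p) * (lorentzNorm w p α * lorentzNorm w p β)) ∧
    IsStableCalkin (lorentzSpace w p) := by
  constructor
  · intro α hα β hβ
    exact CalkinAux.tensor_norm_bound hwa hwpos hp hC hsub hα hβ
  · exact CalkinAux.lorentz_stable_calkin hwa hwpos hp hC hsub
end
end

section
/- Let 𝒜 be a C*-algebra, 𝒥 ⊆ 𝒜 a closed two-sided ideal, and Φ : 𝒜 → 𝒜 a bounded linear operator with Φ(𝒥) ⊆ 𝒥. Let Φ₀ : 𝒥 → 𝒥 be the restriction of Φ, i.e. Φ₀(x) = Φ(x) for x ∈ 𝒥. Then hₙ(Φ₀) ≤ hₙ(Φ) for every n ≥ 1. -/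
open scoped BigOperators

noncomputable section

/-- The `n`-th approximation number of `T` (1-indexed: `approxNum T n = aₙ(T)` is the
infimum of `‖T - F‖` over bounded operators `F` of rank `< n`).  For operators between
Hilbert spaces this equals the `n`-th singular number. -/
def approxNum {X Y : Type*} [NormedAddCommGroup X] [NormedSpace ℂ X]
    [NormedAddCommGroup Y] [NormedSpace ℂ Y] (T : X →L[ℂ] Y) (n : ℕ) : ℝ :=
  sInf {c | ∃ F : X →L[ℂ] Y, LinearMap.rank (F : X →ₗ[ℂ] Y) < (n : Cardinal) ∧ c = ‖T - F‖}

/-- The `n`-th Kolmogorov number `dₙ(T)` (1-indexed). -/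
def kolNum {X Y : Type*} [NormedAddCommGroup X] [NormedSpace ℂ X]
    [NormedAddCommGroup Y] [NormedSpace ℂ Y] (T : X →L[ℂ] Y) (n : ℕ) : ℝ :=
  sInf {c | ∃ V : Submodule ℂ Y, Module.rank ℂ V < (n : Cardinal) ∧
    c = ⨆ x : {x : X // ‖x‖ ≤ 1}, ⨅ y : V, ‖T x.1 - (y : Y)‖}

/-- The `n`-th Hilbert number `hₙ(T)` (1-indexed): the supremum of `sₙ(A ∘ T ∘ B)` over
all Hilbert spaces `K`, `H'` and all contractions `B : K → X`, `A : Y → H'`. -/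
def hilbertNum {X Y : Type u} [NormedAddCommGroup X] [NormedSpace ℂ X]
    [NormedAddCommGroup Y] [NormedSpace ℂ Y] (T : X →L[ℂ] Y) (n : ℕ) : ℝ :=
  sSup {c | ∃ (K : Type u) (_ : NormedAddCommGroup K) (_ : InnerProductSpace ℂ K)
    (_ : CompleteSpace K) (H' : Type u) (_ : NormedAddCommGroup H')
    (_ : InnerProductSpace ℂ H') (_ : CompleteSpace H')
    (B : K →L[ℂ] X) (A : Y →L[ℂ] H'), ‖B‖ ≤ 1 ∧ ‖A‖ ≤ 1 ∧
    c = approxNum ((A.comp T).comp B) n}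

/-- The sequence of singular numbers of an operator, 0-indexed:
`sSeq T n = s_{n+1}(T) = a_{n+1}(T)`. -/
def sSeq {X Y : Type*} [NormedAddCommGroup X] [NormedSpace ℂ X]
    [NormedAddCommGroup Y] [NormedSpace ℂ Y] (T : X →L[ℂ] Y) : ℕ → ℝ :=
  fun n => approxNum T (n + 1)

/-- The multiplication operator `M_{a,b} : x ↦ a * x * b` on a normed algebra. -/
def Mop {A : Type*} [NonUnitalNormedRing A] [NormedSpace ℂ A] [IsScalarTower ℂ A A]
    [SMulCommClass ℂ A A] (a b : A) : A →L[ℂ] A :=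
  (ContinuousLinearMap.mul ℂ A a).comp ((ContinuousLinearMap.mul ℂ A).flip b)

open scoped NNReal

lemma key_unital {B : Type*} [CStarAlgebra B] [PartialOrder B] [StarOrderedRing B]
    (a : B) (ha : 0 ≤ a) {δ : ℝ} (hδ : 0 < δ) :
    ∃ b : B, ‖a * b‖ ≤ 1 ∧ ∀ x : B, x * star x ≤ a → ‖(a * b) * x - x‖ ≤ Real.sqrt δ := by
  have hsa : IsSelfAdjoint a := ha.isSelfAdjoint
  have hspec : ∀ t ∈ spectrum ℝ a, 0 ≤ t := fun t ht => spectrum_nonneg_of_nonneg ha ht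
  have hne : ∀ t ∈ spectrum ℝ a, δ + t ≠ 0 := fun t ht => by have := hspec t ht; positivity
  set g : ℝ → ℝ := fun t => (δ + t)⁻¹ with hg
  have hgc : ContinuousOn g (spectrum ℝ a) :=
    ContinuousOn.inv₀ (by fun_prop) hne
  set b : B := cfc g a with hb
  set f : ℝ → ℝ := fun t => t * g t with hf
  set d : ℝ → ℝ := fun t => δ * g t with hd
  have hfc : ContinuousOn f (spectrum ℝ a) := (continuousOn_id).mul hgc
  have hdc : ContinuousOn d (spectrum ℝ a) := (continuousOn_const).mul hgc
  have hbound : ∀ t ∈ spectrum ℝ a, 0 ≤ f t ∧ f t ≤ 1 := by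
    intro t ht
    have ht0 := hspec t ht
    have h1 : (0:ℝ) < δ + t := by positivity
    constructor
    · exact mul_nonneg ht0 (inv_nonneg.2 h1.le)
    · show t * (δ + t)⁻¹ ≤ 1
      rw [← div_eq_mul_inv, div_le_one h1]; linarith
  have hab : a * b = cfc f a := by
    conv_lhs => rw [← cfc_id ℝ a hsa]
    rw [hb, ← cfc_mul _ _ a continuousOn_id hgc]
    simp only [id_eq]
    rfl
  have hesa : IsSelfAdjoint (a * b) := hab ▸ cfc_predicate f a
  refine ⟨b, ?_, ?_⟩
  · rw [hab]
    apply norm_cfc_le zero_le_one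
    intro t ht
    rw [Real.norm_eq_abs, abs_of_nonneg (hbound t ht).1]
    exact (hbound t ht).2
  · intro x hx
    set e : B := a * b with he
    set z : B := e * x - x with hz
    have hzz : z * star z = (e - 1) * (x * star x) * star (e - 1) := by
      rw [hz]
      simp only [star_sub, star_mul, star_one]
      noncomm_ring
    have hle : z * star z ≤ (e - 1) * a * star (e - 1) :=
      hzz ▸ star_right_conjugate_le_conjugate hx (e - 1)
    have hzn : 0 ≤ z * star z := mul_star_self_nonneg z
    have hnorm : ‖z * star z‖ ≤ ‖(e - 1) * a * star (e - 1)‖ :=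
      CStarAlgebra.norm_le_norm_of_nonneg_of_le hzn hle
    have hstar : star (e - 1) = e - 1 := (hesa.sub (IsSelfAdjoint.one B)).star_eq
    have hfd : cfc f a + cfc d a = 1 := by
      rw [← cfc_add a f d hfc hdc, ← cfc_const_one ℝ a]
      apply cfc_congr
      intro t ht
      have h1 : δ + t ≠ 0 := hne t ht
      show t * (δ + t)⁻¹ + δ * (δ + t)⁻¹ = 1
      field_simp
      ring
    have he1 : e - 1 = -(cfc d a) := by
      rw [hab, ← hfd]; abel
    have hconj : (e - 1) * a * star (e - 1) = cfc (fun t => d t * t * d t) a := by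
      rw [hstar, he1]
      have : -(cfc d a) * a * -(cfc d a) = cfc d a * a * cfc d a := by noncomm_ring
      rw [this]
      nth_rewrite 2 [← cfc_id ℝ a hsa]
      rw [← cfc_mul _ _ a hdc continuousOn_id, ← cfc_mul (fun x => d x * id x) _ a (hdc.mul continuousOn_id) hdc]
      simp only [id_eq]
    have hnormcfc : ‖(e - 1) * a * star (e - 1)‖ ≤ δ := by
      rw [hconj]
      apply norm_cfc_le hδ.le
      intro t ht
      have ht0 := hspec t ht
      have h1 : (0:ℝ) < δ + t := by positivity
      have h2 : δ * (δ + t)⁻¹ ≤ 1 := by rw [← div_eq_mul_inv, div_le_one h1]; linarith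
      have h3 : t * (δ + t)⁻¹ ≤ 1 := by rw [← div_eq_mul_inv, div_le_one h1]; linarith
      show ‖δ * (δ + t)⁻¹ * t * (δ * (δ + t)⁻¹)‖ ≤ δ
      rw [Real.norm_eq_abs, abs_of_nonneg (by positivity)]
      have hrw : δ * (δ + t)⁻¹ * t * (δ * (δ + t)⁻¹) = δ * (δ * (δ+t)⁻¹) * (t * (δ+t)⁻¹) := by
        ring
      rw [hrw]
      calc δ * (δ * (δ+t)⁻¹) * (t * (δ+t)⁻¹) ≤ δ * 1 * 1 := by
            apply mul_le_mul (mul_le_mul le_rfl h2 (by positivity) hδ.le)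
              (by assumption) (by positivity) (by positivity)
        _ = δ := by ring
    have hzsq : ‖z‖ * ‖z‖ ≤ δ := by
      calc ‖z‖ * ‖z‖ = ‖z * star z‖ := (CStarRing.norm_self_mul_star).symm
        _ ≤ _ := hnorm.trans hnormcfc
    nlinarith [Real.sq_sqrt hδ.le, Real.sqrt_nonneg δ, norm_nonneg z]

universe u v

section Ideal
variable {A : Type u} [NonUnitalNormedRing A] [StarRing A]
    [CStarRing A] [NormedSpace ℂ A] [IsScalarTower ℂ A A] [SMulCommClass ℂ A A]
    [StarModule ℂ A] [CompleteSpace A]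
    (J : Submodule ℂ A) (hJr : ∀ a : A, ∀ x ∈ J, x * a ∈ J)

include hJr in
lemma exists_approx_unit_elem (s : Finset A) {ε : ℝ} (hε : 0 < ε) :
    ∃ e : A, e ∈ J ∧ ‖e‖ ≤ 1 ∧ ∀ x ∈ s, x ∈ J → ‖e * x - x‖ ≤ ε := by
  classical
  letI : NonUnitalCStarAlgebra A := {}
  letI : PartialOrder (Unitization ℂ A) := CStarAlgebra.spectralOrder _
  haveI : StarOrderedRing (Unitization ℂ A) := CStarAlgebra.spectralOrderedRing _
  set a : A := ∑ x ∈ s, if x ∈ J then x * star x else 0 with hadef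
  have haJ : a ∈ J := by
    apply Submodule.sum_mem
    intro x hx
    split
    · exact hJr (star x) x ‹_›
    · exact J.zero_mem
  have hterm : ∀ x ∈ s, (0 : Unitization ℂ A) ≤
      ↑(if x ∈ J then x * star x else 0) := by
    intro x hx
    split
    · rw [Unitization.inr_mul, Unitization.inr_star]
      exact mul_star_self_nonneg _
    · simp
  have hanneg : (0 : Unitization ℂ A) ≤ (a : Unitization ℂ A) := by
    rw [hadef]
    rw [show ((↑(∑ x ∈ s, if x ∈ J then x * star x else 0) : Unitization ℂ A)) =
      ∑ x ∈ s, (↑(if x ∈ J then x * star x else 0) : Unitization ℂ A) from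
      map_sum (Unitization.inrNonUnitalAlgHom ℂ A).toDistribMulActionHom.toAddMonoidHom _ _]
    exact Finset.sum_nonneg hterm
  obtain ⟨b, hb1, hb2⟩ := key_unital (a : Unitization ℂ A) hanneg (δ := ε ^ 2) (by positivity)
  set e : A := b.fst • a + a * b.snd with hedef
  have heJ : e ∈ J := J.add_mem (J.smul_mem _ haJ) (hJr b.snd a haJ)
  have hee : (e : Unitization ℂ A) = ↑a * b := by
    conv_rhs => rw [← Unitization.inl_fst_add_inr_snd_eq b]
    rw [mul_add, Unitization.inr_mul_inl, ← Unitization.inr_mul, hedef, Unitization.inr_add]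
  have hsqrt : Real.sqrt (ε ^ 2) = ε := by
    rw [Real.sqrt_eq_iff_eq_sq] <;> nlinarith
  refine ⟨e, heJ, ?_, ?_⟩
  · rw [← Unitization.norm_inr (𝕜 := ℂ), hee]; exact hb1
  · intro x hxs hxJ
    have hxa : (x : Unitization ℂ A) * star (x : Unitization ℂ A) ≤ (a : Unitization ℂ A) := by
      rw [← sub_nonneg, ← Unitization.inr_star, ← Unitization.inr_mul, ← Unitization.inr_sub]
      have hsub : a - x * star x = ∑ y ∈ s.erase x, if y ∈ J then y * star y else 0 := by
        rw [hadef, sub_eq_iff_eq_add, ← Finset.add_sum_erase s _ hxs, if_pos hxJ]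
        abel
      rw [hsub, show ((↑(∑ y ∈ s.erase x, if y ∈ J then y * star y else 0) : Unitization ℂ A)) =
        ∑ y ∈ s.erase x, (↑(if y ∈ J then y * star y else 0) : Unitization ℂ A) from
        map_sum (Unitization.inrNonUnitalAlgHom ℂ A).toDistribMulActionHom.toAddMonoidHom _ _]
      exact Finset.sum_nonneg fun y hy => hterm y (Finset.mem_of_mem_erase hy)
    have := hb2 _ hxa
    rw [← hee, ← Unitization.inr_mul, ← Unitization.inr_sub, Unitization.norm_inr, hsqrt] at this
    exact this


include hJr in
lemma exists_approx_filter :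
    ∃ l : Filter A, l.NeBot ∧ (∀ᶠ e in l, e ∈ J ∧ ‖e‖ ≤ 1) ∧
      ∀ x ∈ J, Filter.Tendsto (fun e => e * x) l (nhds x) := by
  classical
  set ι := Finset A × {ε : ℝ // 0 < ε} with hι
  set S : ι → Set A := fun i =>
    {e | e ∈ J ∧ ‖e‖ ≤ 1 ∧ ∀ x ∈ i.1, x ∈ J → ‖e * x - x‖ ≤ i.2.1} with hS
  have hdir : Directed (· ≥ ·) (fun i => Filter.principal (S i)) := by
    rintro i j
    refine ⟨⟨i.1 ∪ j.1, ⟨min i.2.1 j.2.1, lt_min i.2.2 j.2.2⟩⟩, ?_, ?_⟩ <;>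
      · simp only [ge_iff_le, Filter.principal_mono]
        rintro e ⟨he1, he2, he3⟩
        refine ⟨he1, he2, fun x hx hxJ => ?_⟩
        refine (he3 x (Finset.mem_union.2 (by tauto)) hxJ).trans ?_
        simp [min_le_left, min_le_right]
    
  set l : Filter A := ⨅ i, Filter.principal (S i) with hl
  have hne : ∀ i, (Filter.principal (S i)).NeBot := by
    intro i
    rw [Filter.principal_neBot_iff]
    obtain ⟨e, h1, h2, h3⟩ := exists_approx_unit_elem J hJr i.1 i.2.2
    exact ⟨e, h1, h2, h3⟩
  haveI : l.NeBot := Filter.iInf_neBot_of_directed hdir hne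
  have hmem : ∀ i, S i ∈ l := fun i => Filter.mem_iInf_of_mem i (Filter.mem_principal_self _)
  refine ⟨l, ‹_›, ?_, ?_⟩
  · refine Filter.mem_of_superset (hmem ⟨∅, ⟨1, one_pos⟩⟩) ?_
    rintro e ⟨h1, h2, _⟩; exact ⟨h1, h2⟩
  · intro x hx
    rw [Metric.tendsto_nhds]
    intro ε hε
    refine Filter.mem_of_superset (hmem ⟨{x}, ⟨ε/2, by positivity⟩⟩) ?_
    rintro e ⟨h1, h2, h3⟩
    have := h3 x (Finset.mem_singleton_self x) hx
    simp only [Set.mem_setOf_eq, dist_eq_norm]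
    linarith

include hJr in
lemma exists_contractive_extension
    {H' : Type v} [NormedAddCommGroup H'] [InnerProductSpace ℂ H'] [CompleteSpace H']
    (A' : ↥J →L[ℂ] H') (hA : ‖A'‖ ≤ 1) :
    ∃ T : A →L[ℂ] H', ‖T‖ ≤ 1 ∧ ∀ (x : A) (hx : x ∈ J), T x = A' ⟨x, hx⟩ := by
  classical
  obtain ⟨l, hlne, hlJ, hlten⟩ := exists_approx_filter J hJr
  set U : Ultrafilter A := Ultrafilter.of l with hU
  have hUle : (U : Filter A) ≤ l := Ultrafilter.of_le l
  set k : A → A → ↥J := fun e a => if h : e * a ∈ J then (⟨e * a, h⟩ : ↥J) else 0 with hk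
  set j : A → A → H' := fun e a => A' (k e a) with hj
  have hUJ : ∀ᶠ e in (U : Filter A), e ∈ J ∧ ‖e‖ ≤ 1 := hUle hlJ
  have hknorm : ∀ (a : A), ∀ᶠ e in (U : Filter A), ‖j e a‖ ≤ ‖a‖ := by
    intro a
    filter_upwards [hUJ] with e he
    have hmem : e * a ∈ J := hJr a e he.1
    have : k e a = ⟨e * a, hmem⟩ := dif_pos hmem
    show ‖A' (k e a)‖ ≤ ‖a‖
    rw [this]
    calc ‖A' (⟨e * a, hmem⟩ : ↥J)‖ ≤ ‖A'‖ * ‖(⟨e * a, hmem⟩ : ↥J)‖ := A'.le_opNorm _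
      _ ≤ 1 * ‖e * a‖ := by
          apply mul_le_mul hA le_rfl (norm_nonneg _) zero_le_one
      _ ≤ ‖e‖ * ‖a‖ := by rw [one_mul]; exact norm_mul_le e a
      _ ≤ 1 * ‖a‖ := by
          apply mul_le_mul he.2 le_rfl (norm_nonneg _) zero_le_one
      _ = ‖a‖ := one_mul _
  have hex : ∀ (a : A) (y : H'), ∃ z : ℂ,
      Filter.Tendsto (fun e => (inner ℂ (j e a) y : ℂ)) (U : Filter A) (nhds z) := by
    intro a y
    have hball : ∀ᶠ e in (U : Filter A),
        (inner ℂ (j e a) y : ℂ) ∈ Metric.closedBall (0 : ℂ) (‖a‖ * ‖y‖) := by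
      filter_upwards [hknorm a] with e he
      rw [Metric.mem_closedBall, dist_zero_right]
      calc ‖(inner ℂ (j e a) y : ℂ)‖ ≤ ‖j e a‖ * ‖y‖ := norm_inner_le_norm _ _
        _ ≤ ‖a‖ * ‖y‖ := by
            apply mul_le_mul he le_rfl (norm_nonneg _) (norm_nonneg _)
    obtain ⟨z, -, hz⟩ := (isCompact_closedBall (0 : ℂ) (‖a‖ * ‖y‖)).ultrafilter_le_nhds
      (Ultrafilter.map (fun e => (inner ℂ (j e a) y : ℂ)) U) (by
        rw [Ultrafilter.coe_map]
        exact Filter.le_principal_iff.mpr (Filter.mem_map.mpr hball))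
    exact ⟨z, hz⟩
  choose phi hphi using hex
  -- the functional `y ↦ phi a y` is continuous linear
  have hbnd : ∀ (a : A) (y : H'), ‖phi a y‖ ≤ ‖a‖ * ‖y‖ := by
    intro a y
    refine le_of_tendsto (hphi a y).norm ?_
    filter_upwards [hknorm a] with e he
    calc ‖(inner ℂ (j e a) y : ℂ)‖ ≤ ‖j e a‖ * ‖y‖ := norm_inner_le_norm _ _
      _ ≤ ‖a‖ * ‖y‖ := mul_le_mul he le_rfl (norm_nonneg _) (norm_nonneg _)
  set F : A → StrongDual ℂ H' := fun a => LinearMap.mkContinuous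
    { toFun := fun y => phi a y
      map_add' := fun y y' => by
        refine tendsto_nhds_unique (hphi a (y + y')) ?_
        have := (hphi a y).add (hphi a y')
        simpa [inner_add_right] using this
      map_smul' := fun c y => by
        refine tendsto_nhds_unique (hphi a (c • y)) ?_
        have := (hphi a y).const_mul c
        simpa [inner_smul_right] using this } ‖a‖ (fun y => hbnd a y) with hF
  have hFapp : ∀ a y, F a y = phi a y := fun a y => rfl
  have hFnorm : ∀ a, ‖F a‖ ≤ ‖a‖ :=
    fun a => LinearMap.mkContinuous_norm_le _ (norm_nonneg a) _
  set T0 : A → H' := fun a => (InnerProductSpace.toDual ℂ H').symm (F a) with hT0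
  have hT0inner : ∀ a y, (inner ℂ (T0 a) y : ℂ) = phi a y := by
    intro a y
    rw [hT0]
    exact InnerProductSpace.toDual_symm_apply
  have hT0norm : ∀ a, ‖T0 a‖ ≤ ‖a‖ := by
    intro a
    rw [hT0, LinearIsometryEquiv.norm_map]
    exact hFnorm a
  have hT0add : ∀ a b, T0 (a + b) = T0 a + T0 b := by
    intro a b
    refine ext_inner_right ℂ fun y => ?_
    rw [inner_add_left, hT0inner, hT0inner, hT0inner]
    refine tendsto_nhds_unique (hphi (a + b) y) ?_
    refine Filter.Tendsto.congr' ?_ ((hphi a y).add (hphi b y))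
    filter_upwards [hUJ] with e he
    have h1 : e * a ∈ J := hJr a e he.1
    have h2 : e * b ∈ J := hJr b e he.1
    have h3 : e * (a + b) ∈ J := by rw [mul_add]; exact J.add_mem h1 h2
    rw [hj, hk]
    simp only [dif_pos h1, dif_pos h2, dif_pos h3]
    have h4 : (⟨e * (a + b), h3⟩ : ↥J) = ⟨e * a, h1⟩ + ⟨e * b, h2⟩ :=
      Subtype.ext (by simp [mul_add])
    rw [h4, map_add, inner_add_left]
  have hT0smul : ∀ (c : ℂ) (a : A), T0 (c • a) = c • T0 a := by
    intro c a
    refine ext_inner_right ℂ fun y => ?_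
    rw [inner_smul_left, hT0inner, hT0inner]
    refine tendsto_nhds_unique (hphi (c • a) y) ?_
    refine Filter.Tendsto.congr' ?_ ((hphi a y).const_mul (starRingEnd ℂ c))
    filter_upwards [hUJ] with e he
    have h1 : e * a ∈ J := hJr a e he.1
    have h2 : e * (c • a) ∈ J := by rw [mul_smul_comm]; exact J.smul_mem c h1
    rw [hj, hk]
    simp only [dif_pos h1, dif_pos h2]
    have h4 : (⟨e * (c • a), h2⟩ : ↥J) = c • (⟨e * a, h1⟩ : ↥J) :=
      Subtype.ext (by simp [mul_smul_comm])
    rw [h4, map_smul, inner_smul_left]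
  set T : A →L[ℂ] H' := LinearMap.mkContinuous
    { toFun := T0
      map_add' := hT0add
      map_smul' := hT0smul } 1 (fun a => by simpa using hT0norm a) with hT
  refine ⟨T, LinearMap.mkContinuous_norm_le _ zero_le_one _, ?_⟩
  intro x hx
  show T0 x = A' ⟨x, hx⟩
  refine ext_inner_right ℂ fun y => ?_
  rw [hT0inner]
  refine tendsto_nhds_unique (hphi x y) ?_
  have hkx : Filter.Tendsto (fun e => k e x) l (nhds (⟨x, hx⟩ : ↥J)) := by
    rw [tendsto_subtype_rng]
    refine Filter.Tendsto.congr' ?_ (hlten x hx)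
    filter_upwards [hlJ] with e he
    have h1 : e * x ∈ J := hJr x e he.1
    rw [hk]
    simp [dif_pos h1]
  have hjx : Filter.Tendsto (fun e => j e x) l (nhds (A' ⟨x, hx⟩)) :=
    (A'.continuous.tendsto _).comp hkx
  exact (hjx.inner tendsto_const_nhds).mono_left hUle

end Ideal

section MainProof

open scoped NNReal

variable {X Y : Type*} [NormedAddCommGroup X] [NormedSpace ℂ X]
    [NormedAddCommGroup Y] [NormedSpace ℂ Y]

lemma approxNum_nonneg (T : X →L[ℂ] Y) (n : ℕ) : 0 ≤ approxNum T n := by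
  apply Real.sInf_nonneg
  rintro c ⟨F, -, rfl⟩
  exact norm_nonneg _

lemma approxNum_le_norm (T : X →L[ℂ] Y) {n : ℕ} (hn : 1 ≤ n) : approxNum T n ≤ ‖T‖ := by
  apply csInf_le
  · exact ⟨0, by rintro c ⟨F, -, rfl⟩; exact norm_nonneg _⟩
  · refine ⟨0, ?_, by simp⟩
    rw [show ((0 : X →L[ℂ] Y) : X →ₗ[ℂ] Y) = 0 from rfl, LinearMap.rank_zero]
    exact_mod_cast Nat.pos_of_ne_zero (by omega)

end MainProof

/-- Let `𝒜` be a C*-algebra, `𝒥 ⊆ 𝒜` a closed two-sided ideal and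
`Φ : 𝒜 → 𝒜` a bounded operator with `Φ(𝒥) ⊆ 𝒥`; let `Φ₀ : 𝒥 → 𝒥` be the restriction
of `Φ`.  Then `hₙ(Φ₀) ≤ hₙ(Φ)` for every `n ≥ 1`. -/
theorem hilbertNum_restrict_le {A : Type u} [NonUnitalNormedRing A] [StarRing A]
    [CStarRing A] [NormedSpace ℂ A] [IsScalarTower ℂ A A] [SMulCommClass ℂ A A]
    [StarModule ℂ A] [CompleteSpace A]
    (J : Submodule ℂ A) (hJclosed : IsClosed (J : Set A))
    (hJl : ∀ a : A, ∀ x ∈ J, a * x ∈ J) (hJr : ∀ a : A, ∀ x ∈ J, x * a ∈ J)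
    (Φ : A →L[ℂ] A) (hΦJ : ∀ x ∈ J, Φ x ∈ J)
    (Φ₀ : J →L[ℂ] J) (hΦ₀ : ∀ x : J, (Φ₀ x : A) = Φ (x : A)) :
    ∀ n : ℕ, 1 ≤ n → hilbertNum Φ₀ n ≤ hilbertNum Φ n := by
  intro n hn
  set SΦ : Set ℝ := {c | ∃ (K : Type u) (_ : NormedAddCommGroup K) (_ : InnerProductSpace ℂ K)
    (_ : CompleteSpace K) (H' : Type u) (_ : NormedAddCommGroup H')
    (_ : InnerProductSpace ℂ H') (_ : CompleteSpace H')
    (B : K →L[ℂ] A) (A' : A →L[ℂ] H'), ‖B‖ ≤ 1 ∧ ‖A'‖ ≤ 1 ∧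
    c = approxNum ((A'.comp Φ).comp B) n} with hSΦ
  have hgoal : hilbertNum Φ n = sSup SΦ := rfl
  have hbddS : BddAbove SΦ := by
    refine ⟨‖Φ‖, ?_⟩
    rintro c ⟨K, iK1, iK2, iK3, H', iH1, iH2, iH3, B, A', hB, hA, rfl⟩
    refine (approxNum_le_norm _ hn).trans ?_
    calc ‖(A'.comp Φ).comp B‖ ≤ ‖A'.comp Φ‖ * ‖B‖ := ContinuousLinearMap.opNorm_comp_le _ _
      _ ≤ (‖A'‖ * ‖Φ‖) * ‖B‖ := by
          apply mul_le_mul (ContinuousLinearMap.opNorm_comp_le _ _) le_rfl (norm_nonneg _)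
          positivity
      _ ≤ (1 * ‖Φ‖) * 1 := by
          apply mul_le_mul _ hB (norm_nonneg _) (by positivity)
          exact mul_le_mul hA le_rfl (norm_nonneg _) zero_le_one
      _ = ‖Φ‖ := by ring
  have hS0 : (0:ℝ) ≤ sSup SΦ := by
    set Z : Type u := EuclideanSpace ℂ (ULift (Fin 0)) with hZ
    have hmem : approxNum (((0 : A →L[ℂ] Z).comp Φ).comp (0 : Z →L[ℂ] A)) n ∈ SΦ :=
      ⟨Z, inferInstance, inferInstance, inferInstance, Z, inferInstance, inferInstance,
        inferInstance, 0, 0, by simp, by simp, rfl⟩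
    exact (approxNum_nonneg _ _).trans (le_csSup hbddS hmem)
  rw [hgoal]
  apply Real.sSup_le _ hS0
  rintro c ⟨K, iK1, iK2, iK3, H', iH1, iH2, iH3, B, A', hB, hA, rfl⟩
  obtain ⟨T, hT1, hT2⟩ := exists_contractive_extension J hJr A' hA
  set Bt : K →L[ℂ] A := J.subtypeL.comp B with hBt
  have hBtn : ‖Bt‖ ≤ 1 := by
    apply ContinuousLinearMap.opNorm_le_bound _ zero_le_one
    intro k
    rw [one_mul, hBt]
    simp only [ContinuousLinearMap.comp_apply, Submodule.subtypeL_apply]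
    calc ‖((B k : ↥J) : A)‖ = ‖B k‖ := rfl
      _ ≤ ‖B‖ * ‖k‖ := B.le_opNorm k
      _ ≤ 1 * ‖k‖ := mul_le_mul hB le_rfl (norm_nonneg _) zero_le_one
      _ = ‖k‖ := one_mul _
  have heq : (T.comp Φ).comp Bt = (A'.comp Φ₀).comp B := by
    ext kk
    simp only [ContinuousLinearMap.comp_apply, Submodule.subtypeL_apply, hBt]
    have hmem : Φ ((B kk : A)) ∈ J := hΦJ _ (B kk).2
    rw [hT2 _ hmem]
    congr 1
    exact Subtype.ext (hΦ₀ (B kk)).symm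
  have hc : approxNum ((A'.comp Φ₀).comp B) n ∈ SΦ :=
    ⟨K, iK1, iK2, iK3, H', iH1, iH2, iH3, Bt, T, hBtn, hT1, by rw [heq]⟩
  exact le_csSup hbddS hc
end
end
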